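/- arXiv:2002.00585 — 2 statements merged into one kernel-verified Lean document; each statement's English description precedes it below -/
import Mathlib

section
/- Fix a scalar α ∈ [-1/√s, 1/√s] for some s ∈ [d], an index i ∈ [d], and ε, δ > 0. Let w⁽¹⁾,…,w⁽ᵏ⁾ ∈ ℝᵈ be sampled i.i.d. uniformly from [-1,1]ᵈ, and u⁽¹⁾,…,u⁽ᵏ⁾ sampled i.i.d. uniformly from [-1,1]. If k ≥ (4/ε²)·log(2/δ), then with probability at least 1-δ there exist binary masks b⁽¹⁾,…,b⁽ᵏ⁾ ∈ {0,1}ᵈ such that the function g(x) = Σⱼ u⁽ʲ⁾ σ(⟨w⁽ʲ⁾ ⊙ b⁽ʲ⁾, x⟩), where σ is the ReLU and ⊙ is the entrywise product, satisfies |g(x) - α·xᵢ| ≤ 2ε for all x with ‖x‖_∞ ≤ 1. Moreover Σⱼ ‖b⁽ʲ⁾‖₀ ≤ 2 and each mask has at most one nonzero entry. -/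
open MeasureTheory ProbabilityTheory Real
open scoped Classical

noncomputable def relu (t : ℝ) : ℝ := max t 0

/-- Uniform probability distribution on a set. -/
noncomputable def unif {α : Type*} [MeasureSpace α] (s : Set α) : Measure α :=
  (volume s)⁻¹ • volume.restrict s

/-- Number of nonzero entries of a vector. -/
noncomputable def l0 {d : ℕ} (b : Fin d → ℝ) : ℕ :=
  (Finset.univ.filter (fun t => b t ≠ 0)).card

/-- a.e. congruence for `iIndepFun`. -/
lemma iIndepFun_ae_congr {Ω ι : Type*} [MeasurableSpace Ω] {μ : Measure Ω}
    {β : ι → Type*} {m : ∀ i, MeasurableSpace (β i)} {f g : ∀ i, Ω → β i}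
    (hfg : ∀ i, f i =ᵐ[μ] g i) (hf : iIndepFun (m := m) f μ) : iIndepFun (m := m) g μ := by
  rw [iIndepFun_iff] at hf ⊢
  intro S f' hf'
  choose sets hsets hpre using fun i (hi : i ∈ S) => hf' i hi
  set f'' : ι → Set Ω := fun i => ⋂ (hi : i ∈ S), f i ⁻¹' sets i hi with hf''def
  have hf''eq : ∀ (i : ι) (hi : i ∈ S), f'' i = f i ⁻¹' sets i hi := by
    intro i hi
    ext ω
    simp only [hf''def, Set.mem_iInter, Set.mem_preimage]
    exact ⟨fun h => h hi, fun h _ => h⟩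
  have hae : ∀ i, i ∈ S → f'' i =ᵐ[μ] f' i := by
    intro i hi
    rw [hf''eq i hi, ← hpre i hi]
    filter_upwards [hfg i] with ω hω
    exact congrArg (fun v => v ∈ sets i hi) hω
  have h1 : μ (⋂ i ∈ S, f' i) = μ (⋂ i ∈ S, f'' i) := by
    refine measure_congr ?_
    rw [Filter.eventuallyEq_set]
    filter_upwards [(ae_ball_iff S.countable_toSet).2
      (fun i hi => Filter.eventuallyEq_set.1 (hae i hi))] with ω hω
    simp only [Set.mem_iInter]
    exact ⟨fun h i hi => (hω i hi).2 (h i hi), fun h i hi => (hω i hi).1 (h i hi)⟩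
  have h2 : ∀ i ∈ S, μ (f' i) = μ (f'' i) := fun i hi => (measure_congr (hae i hi)).symm
  rw [h1, Finset.prod_congr rfl h2]
  refine hf S (fun i hi => ?_)
  rw [hf''eq i hi]
  exact ⟨sets i hi, hsets i hi, rfl⟩

/-- a.e. equality of countable intersections. -/
lemma iInter_ae_congr {Ω κ : Type*} [MeasurableSpace Ω] {μ : Measure Ω} [Countable κ]
    {s t : κ → Set Ω} (h : ∀ j, (s j : Set Ω) =ᵐ[μ] t j) :
    (⋂ j, s j : Set Ω) =ᵐ[μ] ⋂ j, t j := by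
  rw [Filter.eventuallyEq_set]
  filter_upwards [ae_all_iff.2 fun j => Filter.eventuallyEq_set.1 (h j)] with ω hω
  simp only [Set.mem_iInter]
  exact ⟨fun h' j => (hω j).1 (h' j), fun h' j => (hω j).2 (h' j)⟩

/-- Product formula for events measurable w.r.t. sups of pairs of σ-algebras from a
jointly independent family, the pairs of indices being pairwise disjoint. -/
lemma grouped_prod_formula {Ω ι κ : Type*} [mΩ : MeasurableSpace Ω] {μ : Measure Ω}
    [IsProbabilityMeasure μ] {m : ι → MeasurableSpace Ω}
    (h_le : ∀ x, m x ≤ mΩ) (h_indep : iIndep m μ)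
    (a b : κ → ι)
    (hinj : ∀ j l, j ≠ l → ({a j, b j} : Set ι) ∩ {a l, b l} = ∅)
    (C : κ → Set Ω) (hC : ∀ j, MeasurableSet[m (a j) ⊔ m (b j)] (C j))
    (T : Finset κ) : μ (⋂ j ∈ T, C j) = ∏ j ∈ T, μ (C j) := by
  induction T using Finset.induction with
  | empty => simp
  | @insert c T hcT IH =>
    rw [Finset.set_biInter_insert, Finset.prod_insert hcT, ← IH]
    have hdisj : Disjoint ({a c, b c} : Set ι) (⋃ j ∈ (T : Set κ), ({a j, b j} : Set ι)) := by
      rw [Set.disjoint_left]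
      intro x hx hx2
      obtain ⟨j, hj, hxj⟩ := Set.mem_iUnion₂.1 hx2
      have hne : c ≠ j := fun h => hcT (h ▸ hj)
      have hmem : x ∈ ({a c, b c} : Set ι) ∩ {a j, b j} := ⟨hx, hxj⟩
      rw [hinj c j hne] at hmem
      exact hmem
    have hIndep2 := indep_iSup_of_disjoint h_le h_indep hdisj
    have hle1 : m (a c) ⊔ m (b c) ≤ ⨆ x ∈ ({a c, b c} : Set ι), m x := by
      refine sup_le ?_ ?_
      · exact le_iSup₂ (f := fun x (_ : x ∈ ({a c, b c} : Set ι)) => m x) (a c) (by simp)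
      · exact le_iSup₂ (f := fun x (_ : x ∈ ({a c, b c} : Set ι)) => m x) (b c) (by simp)
    have hle2 : ∀ j ∈ T, m (a j) ⊔ m (b j)
        ≤ ⨆ x ∈ (⋃ j ∈ (T : Set κ), ({a j, b j} : Set ι)), m x := by
      intro j hj
      refine sup_le ?_ ?_
      · exact le_iSup₂ (f := fun x (_ : x ∈ ⋃ j ∈ (T : Set κ), ({a j, b j} : Set ι)) => m x)
          (a j) (Set.mem_iUnion₂.2 ⟨j, hj, by simp⟩)
      · exact le_iSup₂ (f := fun x (_ : x ∈ ⋃ j ∈ (T : Set κ), ({a j, b j} : Set ι)) => m x)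
          (b j) (Set.mem_iUnion₂.2 ⟨j, hj, by simp⟩)
    refine (Indep_iff _ _ _).1 hIndep2 _ _ (hle1 _ (hC c)) ?_
    exact Finset.measurableSet_biInter T (fun j hj => hle2 j hj _ (hC j))

lemma unif_icc_apply {a b : ℝ} (hab : a ≤ b) (ha : -1 ≤ a) (hb : b ≤ 1) :
    unif (Set.Icc (-1 : ℝ) 1) (Set.Icc a b) = ENNReal.ofReal ((b - a) / 2) := by
  rw [unif, Measure.smul_apply, smul_eq_mul,
    Measure.restrict_apply measurableSet_Icc,
    Set.inter_eq_left.2 (Set.Icc_subset_Icc ha hb), Real.volume_Icc, Real.volume_Icc]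
  rw [show (1 : ℝ) - (-1) = 2 by norm_num,
    ← ENNReal.ofReal_inv_of_pos (by norm_num : (0:ℝ) < 2), ← ENNReal.ofReal_mul (by norm_num)]
  congr 1
  ring

lemma unif_univ_eq_one : unif (Set.Icc (-1 : ℝ) 1) Set.univ = 1 := by
  rw [unif, Measure.smul_apply, smul_eq_mul, Measure.restrict_apply MeasurableSet.univ,
    Set.univ_inter, Real.volume_Icc]
  rw [show (1 : ℝ) - (-1) = 2 by norm_num]
  exact ENNReal.inv_mul_cancel (by simp) (by simp)

lemma aemeasurable_of_map_unif {Ω : Type*} [MeasurableSpace Ω] {μ : Measure Ω} {f : Ω → ℝ}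
    (h : μ.map f = unif (Set.Icc (-1 : ℝ) 1)) : AEMeasurable f μ := by
  by_contra hc
  have h0 := Measure.map_of_not_aemeasurable hc
  rw [h0] at h
  have h1 := congrArg (fun ν : Measure ℝ => ν Set.univ) h
  simp only [Measure.coe_zero, Pi.zero_apply] at h1
  rw [unif_univ_eq_one] at h1
  exact one_ne_zero h1.symm

lemma key_ineq {α ε v w : ℝ} (hα : |α| ≤ 1) (hε : 0 < ε) (hε2 : ε ≤ 1)
    (hv : |v - α| ≤ ε) (hv1 : |v| ≤ 1) (hw : 1 - ε ≤ w) (hw2 : w ≤ 1) :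
    |v * w - α| ≤ 2 * ε := by
  rw [abs_le] at *
  constructor <;> nlinarith [mul_nonneg (by linarith : (0:ℝ) ≤ 1 - w) (by linarith : (0:ℝ) ≤ 1 + v),
    mul_nonneg (by linarith : (0:ℝ) ≤ 1 - w) (by linarith : (0:ℝ) ≤ 1 - v)]

lemma pow_bound {p L : ℝ} (hp1 : p ≤ 1) (k : ℕ)
    (hk : L ≤ k * p) : (1 - p) ^ k ≤ Real.exp (-L) := by
  have h1 : (1 - p) ^ k ≤ Real.exp (-p) ^ k := by
    refine pow_le_pow_left₀ (by linarith) ?_ k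
    linarith [Real.add_one_le_exp (-p)]
  refine h1.trans ?_
  rw [← Real.exp_nat_mul]
  exact Real.exp_le_exp.2 (by nlinarith)

/-- The deterministic mask construction: given a "positive" neuron and a "negative" neuron
with suitable weights, the two-weight mask works. -/
lemma mask_construction {d k : ℕ} (i : Fin d) (α ε : ℝ) (hε : 0 < ε) (hε2 : ε < 1/2)
    (Wv : Fin k → Fin d → ℝ) (uv : Fin k → ℝ)
    (ja jb ka kb : ℝ)
    (hJ : ∀ v ∈ Set.Icc ja jb, ∀ w ∈ Set.Icc (1-ε) 1, |v*w - α| ≤ 2*ε)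
    (hK : ∀ v ∈ Set.Icc ka kb, ∀ w ∈ Set.Icc (-1 : ℝ) (ε-1), |v*w - α| ≤ 2*ε)
    (j₁ j₂ : Fin k)
    (h1 : Wv j₁ i ∈ Set.Icc (1-ε) 1) (h1u : uv j₁ ∈ Set.Icc ja jb)
    (h2 : Wv j₂ i ∈ Set.Icc (-1 : ℝ) (ε-1)) (h2u : uv j₂ ∈ Set.Icc ka kb) :
    ∃ b : Fin k → Fin d → ℝ, (∀ j t, b j t = 0 ∨ b j t = 1) ∧
      (∀ x : Fin d → ℝ, (∀ t, |x t| ≤ 1) →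
        |(∑ j, uv j * relu (∑ t, Wv j t * b j t * x t)) - α * x i| ≤ 2 * ε) ∧
      (∑ j, l0 (b j)) ≤ 2 ∧ (∀ j, l0 (b j) ≤ 1) := by
  have hne : j₁ ≠ j₂ := by
    intro h
    rw [h] at h1
    have := h1.1
    have := h2.2
    linarith
  refine ⟨fun j t => if (j = j₁ ∨ j = j₂) ∧ t = i then 1 else 0, fun j t => ?_, ?_, ?_, ?_⟩
  · by_cases h : (j = j₁ ∨ j = j₂) ∧ t = i
    · exact Or.inr (if_pos h)
    · exact Or.inl (if_neg h)
  · intro x hx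
    have hin : ∀ j : Fin k,
        (∑ t, Wv j t * (if (j = j₁ ∨ j = j₂) ∧ t = i then 1 else 0) * x t)
          = if j = j₁ ∨ j = j₂ then Wv j i * x i else 0 := by
      intro j
      by_cases hj : j = j₁ ∨ j = j₂
      · rw [if_pos hj, Finset.sum_eq_single i]
        · simp [hj]
        · intro t _ hti
          simp [hti]
        · intro h
          exact absurd (Finset.mem_univ i) h
      · rw [if_neg hj]
        refine Finset.sum_eq_zero fun t _ => ?_
        simp [hj]
    have hterm : ∀ j : Fin k,
        uv j * relu (∑ t, Wv j t * (if (j = j₁ ∨ j = j₂) ∧ t = i then 1 else 0) * x t)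
          = if j = j₁ ∨ j = j₂ then uv j * relu (Wv j i * x i) else 0 := by
      intro j
      rw [hin j]
      by_cases hj : j = j₁ ∨ j = j₂
      · rw [if_pos hj, if_pos hj]
      · rw [if_neg hj, if_neg hj]
        simp [relu]
    rw [Finset.sum_congr rfl fun j _ => hterm j]
    have hfilter : Finset.univ.filter (fun j : Fin k => j = j₁ ∨ j = j₂) = {j₁, j₂} := by
      ext j
      simp
    rw [← Finset.sum_filter, hfilter, Finset.sum_pair hne]
    rcases le_or_gt 0 (x i) with hxi | hxi
    · have e1 : relu (Wv j₁ i * x i) = Wv j₁ i * x i :=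
        max_eq_left (mul_nonneg (by linarith [h1.1]) hxi)
      have e2 : relu (Wv j₂ i * x i) = 0 := by
        refine max_eq_right ?_
        nlinarith [mul_nonneg hxi (show (0:ℝ) ≤ -(Wv j₂ i) by linarith [h2.2])]
      rw [e1, e2]
      have hkey := hJ (uv j₁) h1u (Wv j₁ i) h1
      have heq : uv j₁ * (Wv j₁ i * x i) + uv j₂ * 0 - α * x i
          = (uv j₁ * Wv j₁ i - α) * x i := by ring
      rw [heq, abs_mul]
      calc |uv j₁ * Wv j₁ i - α| * |x i| ≤ (2*ε) * 1 :=
            mul_le_mul hkey (hx i) (abs_nonneg _) (by linarith)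
        _ = 2*ε := mul_one _
    · have e1 : relu (Wv j₁ i * x i) = 0 := by
        refine max_eq_right ?_
        nlinarith [mul_nonneg (show (0:ℝ) ≤ -(x i) by linarith) (show (0:ℝ) ≤ Wv j₁ i by
          linarith [h1.1])]
      have e2 : relu (Wv j₂ i * x i) = Wv j₂ i * x i := by
        refine max_eq_left ?_
        nlinarith [mul_nonneg (show (0:ℝ) ≤ -(x i) by linarith)
          (show (0:ℝ) ≤ -(Wv j₂ i) by linarith [h2.2])]
      rw [e1, e2]
      have hkey := hK (uv j₂) h2u (Wv j₂ i) h2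
      have heq : uv j₁ * 0 + uv j₂ * (Wv j₂ i * x i) - α * x i
          = (uv j₂ * Wv j₂ i - α) * x i := by ring
      rw [heq, abs_mul]
      calc |uv j₂ * Wv j₂ i - α| * |x i| ≤ (2*ε) * 1 :=
            mul_le_mul hkey (hx i) (abs_nonneg _) (by linarith)
        _ = 2*ε := mul_one _
  · have hl : ∀ j : Fin k,
        l0 (fun t => if (j = j₁ ∨ j = j₂) ∧ t = i then (1:ℝ) else 0)
          ≤ if j = j₁ ∨ j = j₂ then 1 else 0 := by
      intro j
      by_cases hj : j = j₁ ∨ j = j₂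
      · rw [if_pos hj]
        refine le_trans (Finset.card_le_card (show _ ⊆ ({i} : Finset (Fin d)) from ?_)) (by simp)
        intro t ht
        simp only [Finset.mem_filter, Finset.mem_univ, true_and] at ht
        simp only [Finset.mem_singleton]
        by_contra hti
        exact ht (by simp [hti])
      · rw [if_neg hj]
        simp [l0, Finset.filter_eq_empty_iff, hj]
    calc (∑ j, l0 (fun t => if (j = j₁ ∨ j = j₂) ∧ t = i then (1:ℝ) else 0))
        ≤ ∑ j, (if j = j₁ ∨ j = j₂ then 1 else 0) := Finset.sum_le_sum fun j _ => hl j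
      _ = ∑ j ∈ Finset.univ.filter (fun j : Fin k => j = j₁ ∨ j = j₂), 1 :=
          (Finset.sum_filter _ _).symm
      _ = (Finset.univ.filter (fun j : Fin k => j = j₁ ∨ j = j₂)).card := by
          rw [Finset.sum_const, smul_eq_mul, mul_one]
      _ ≤ ({j₁, j₂} : Finset (Fin k)).card := Finset.card_le_card (by intro j hj; simpa using hj)
      _ ≤ 2 := by rw [Finset.card_pair hne]
  · intro j
    refine le_trans (Finset.card_le_card (show _ ⊆ ({i} : Finset (Fin d)) from ?_)) (by simp)
    intro t ht
    simp only [Finset.mem_filter, Finset.mem_univ, true_and] at ht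
    simp only [Finset.mem_singleton]
    by_contra hti
    exact ht (by simp [hti])

/-- a single linear coordinate function `x ↦ α·xᵢ` can be approximated,
with probability at least `1-δ`, by pruning a random two-layer ReLU network whose
weights are i.i.d. uniform on `[-1,1]`, provided `k ≥ (4/ε²)·log(2/δ)`; the mask uses
at most 2 weights in total and at most one per neuron. -/
theorem single_coordinate_by_pruning
    (d k s : ℕ) (hd : 0 < d) (hs1 : 1 ≤ s) (hsd : s ≤ d)
    (α : ℝ) (hα : |α| ≤ 1 / Real.sqrt s) (i : Fin d)
    (ε δ : ℝ) (hε : 0 < ε) (hδ : 0 < δ)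
    {Ω : Type*} [MeasurableSpace Ω] (μ : Measure Ω) [IsProbabilityMeasure μ]
    (W : Fin k → Ω → (Fin d → ℝ)) (u : Fin k → Ω → ℝ)
    (hindep : iIndepFun
      (Sum.elim (fun p : Fin k × Fin d => fun ω => W p.1 ω p.2)
        (fun j : Fin k => u j)) μ)
    (hWdist : ∀ (j : Fin k) (t : Fin d),
      μ.map (fun ω => W j ω t) = unif (Set.Icc (-1 : ℝ) 1))
    (hudist : ∀ j : Fin k, μ.map (u j) = unif (Set.Icc (-1 : ℝ) 1))
    (hk : 4 / ε ^ 2 * Real.log (2 / δ) ≤ (k : ℝ)) :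
    ENNReal.ofReal (1 - δ) ≤ μ {ω | ∃ b : Fin k → Fin d → ℝ,
      (∀ j t, b j t = 0 ∨ b j t = 1) ∧
      (∀ x : Fin d → ℝ, (∀ t, |x t| ≤ 1) →
        |(∑ j, u j ω * relu (∑ t, W j ω t * b j t * x t)) - α * x i| ≤ 2 * ε) ∧
      (∑ j, l0 (b j)) ≤ 2 ∧ (∀ j, l0 (b j) ≤ 1)} := by
  classical
  -- |α| ≤ 1
  have hsqrt : (1:ℝ) ≤ Real.sqrt s := by
    rw [show (1:ℝ) = Real.sqrt 1 by simp]
    exact Real.sqrt_le_sqrt (by exact_mod_cast hs1)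
  have hα1 : |α| ≤ 1 := hα.trans (by
    rw [div_le_one (lt_of_lt_of_le one_pos hsqrt)]
    exact hsqrt)
  rcases le_or_gt 1 δ with hδ1 | hδ1
  · calc ENNReal.ofReal (1 - δ) = 0 := by rw [ENNReal.ofReal_eq_zero]; linarith
      _ ≤ _ := zero_le
  rcases le_or_gt (1/2 : ℝ) ε with hε2 | hε2
  · -- trivial: the empty mask works everywhere
    have huniv : {ω | ∃ b : Fin k → Fin d → ℝ,
        (∀ j t, b j t = 0 ∨ b j t = 1) ∧
        (∀ x : Fin d → ℝ, (∀ t, |x t| ≤ 1) →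
          |(∑ j, u j ω * relu (∑ t, W j ω t * b j t * x t)) - α * x i| ≤ 2 * ε) ∧
        (∑ j, l0 (b j)) ≤ 2 ∧ (∀ j, l0 (b j) ≤ 1)} = Set.univ := by
      refine Set.eq_univ_of_forall fun ω => ?_
      refine ⟨fun _ _ => 0, fun j t => Or.inl rfl, ?_, ?_, ?_⟩
      · intro x hx
        have hz : ∀ j : Fin k, u j ω * relu (∑ t, W j ω t * 0 * x t) = 0 := by
          intro j
          simp [relu]
        rw [Finset.sum_congr rfl fun j _ => hz j, Finset.sum_const_zero, zero_sub, abs_neg,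
          abs_mul]
        calc |α| * |x i| ≤ 1 * 1 := mul_le_mul hα1 (hx i) (abs_nonneg _) zero_le_one
          _ ≤ 2 * ε := by linarith
      · simp [l0]
      · intro j; simp [l0]
    rw [huniv, measure_univ]
    exact ENNReal.ofReal_le_one.2 (by linarith)
  -- main case : δ < 1, ε < 1/2
  have hδ2pos : (0:ℝ) < 2/δ := by positivity
  have hLpos : 0 ≤ Real.log (2/δ) := Real.log_nonneg (by rw [le_div_iff₀ hδ]; linarith)
  -- the two auxiliary intervals
  obtain ⟨ja, jb, ka, kb, hja, hjb, hjlen, hka, hkb, hklen, hJprop, hKprop⟩ :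
      ∃ ja jb ka kb : ℝ, -1 ≤ ja ∧ jb ≤ 1 ∧ jb - ja = ε ∧ -1 ≤ ka ∧ kb ≤ 1 ∧ kb - ka = ε ∧
        (∀ v ∈ Set.Icc ja jb, ∀ w ∈ Set.Icc (1-ε) 1, |v*w - α| ≤ 2*ε) ∧
        (∀ v ∈ Set.Icc ka kb, ∀ w ∈ Set.Icc (-1 : ℝ) (ε-1), |v*w - α| ≤ 2*ε) := by
    have habs := abs_le.1 hα1
    rcases le_or_gt 0 α with hα0 | hα0
    · refine ⟨α - ε, α, -α, ε - α, by linarith, by linarith, by ring,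
        by linarith, by linarith, by ring, ?_, ?_⟩
      · intro v hv w hw
        exact key_ineq hα1 hε (by linarith) (abs_le.2 ⟨by linarith [hv.1], by linarith [hv.2]⟩)
          (abs_le.2 ⟨by linarith [hv.1], by linarith [hv.2]⟩) hw.1 hw.2
      · intro v hv w hw
        have h := key_ineq (v := -v) (w := -w) hα1 hε (by linarith)
          (abs_le.2 ⟨by linarith [hv.2], by linarith [hv.1]⟩)
          (abs_le.2 ⟨by linarith [hv.2], by linarith [hv.1]⟩)
          (by linarith [hw.2]) (by linarith [hw.1])
        rwa [neg_mul_neg] at h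
    · refine ⟨α, α + ε, -α - ε, -α, by linarith, by linarith, by ring,
        by linarith, by linarith, by ring, ?_, ?_⟩
      · intro v hv w hw
        exact key_ineq hα1 hε (by linarith) (abs_le.2 ⟨by linarith [hv.1], by linarith [hv.2]⟩)
          (abs_le.2 ⟨by linarith [hv.1], by linarith [hv.2]⟩) hw.1 hw.2
      · intro v hv w hw
        have h := key_ineq (v := -v) (w := -w) hα1 hε (by linarith)
          (abs_le.2 ⟨by linarith [hv.2], by linarith [hv.1]⟩)
          (abs_le.2 ⟨by linarith [hv.2], by linarith [hv.1]⟩)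
          (by linarith [hw.2]) (by linarith [hw.1])
        rwa [neg_mul_neg] at h
  -- measurable modifications
  have hWae : ∀ (j : Fin k) (t : Fin d), AEMeasurable (fun ω => W j ω t) μ :=
    fun j t => aemeasurable_of_map_unif (hWdist j t)
  have huae : ∀ j : Fin k, AEMeasurable (u j) μ := fun j => aemeasurable_of_map_unif (hudist j)
  set F' : (Fin k × Fin d) ⊕ Fin k → Ω → ℝ :=
    Sum.elim (fun p => (hWae p.1 p.2).mk _) (fun j => (huae j).mk _) with hF'def
  have hF'meas : ∀ x, Measurable (F' x) := by
    rintro (p | j)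
    · exact (hWae p.1 p.2).measurable_mk
    · exact (huae j).measurable_mk
  have hFae : ∀ x, (Sum.elim (fun p : Fin k × Fin d => fun ω => W p.1 ω p.2)
      (fun j : Fin k => u j)) x =ᵐ[μ] F' x := by
    rintro (p | j)
    · exact (hWae p.1 p.2).ae_eq_mk
    · exact (huae j).ae_eq_mk
  have hindep' : iIndepFun F' μ := iIndepFun_ae_congr hFae hindep
  have hmeasW : ∀ (j : Fin k) (a c : ℝ), -1 ≤ a → c ≤ 1 → a ≤ c →
      μ (F' (Sum.inl (j, i)) ⁻¹' Set.Icc a c) = ENNReal.ofReal ((c - a)/2) := by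
    intro j a c h1 h2 h3
    rw [← Measure.map_apply (hF'meas _) measurableSet_Icc]
    have : μ.map (F' (Sum.inl (j, i))) = unif (Set.Icc (-1:ℝ) 1) := by
      rw [← Measure.map_congr (hFae (Sum.inl (j, i)))]
      exact hWdist j i
    rw [this, unif_icc_apply h3 h1 h2]
  have hmeasu : ∀ (j : Fin k) (a c : ℝ), -1 ≤ a → c ≤ 1 → a ≤ c →
      μ (F' (Sum.inr j) ⁻¹' Set.Icc a c) = ENNReal.ofReal ((c - a)/2) := by
    intro j a c h1 h2 h3
    rw [← Measure.map_apply (hF'meas _) measurableSet_Icc]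
    have : μ.map (F' (Sum.inr j)) = unif (Set.Icc (-1:ℝ) 1) := by
      rw [← Measure.map_congr (hFae (Sum.inr j))]
      exact hudist j
    rw [this, unif_icc_apply h3 h1 h2]
  -- the main probabilistic bound
  have hmain : ∀ (a₁ b₁ a₂ b₂ : ℝ), -1 ≤ a₁ → b₁ ≤ 1 → b₁ - a₁ = ε →
      -1 ≤ a₂ → b₂ ≤ 1 → b₂ - a₂ = ε →
      μ (⋂ j, (F' (Sum.inl (j,i)) ⁻¹' Set.Icc a₁ b₁ ∩ F' (Sum.inr j) ⁻¹' Set.Icc a₂ b₂)ᶜ)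
        ≤ ENNReal.ofReal (δ/2) := by
    intro a₁ b₁ a₂ b₂ h₁ h₂ h₃ h₄ h₅ h₆
    have ha₁b₁ : a₁ ≤ b₁ := by linarith
    have ha₂b₂ : a₂ ≤ b₂ := by linarith
    set C : Fin k → Set Ω :=
      fun j => (F' (Sum.inl (j,i)) ⁻¹' Set.Icc a₁ b₁ ∩ F' (Sum.inr j) ⁻¹' Set.Icc a₂ b₂)ᶜ
      with hCdef
    have hinj : ∀ j l : Fin k, j ≠ l →
        ({Sum.inl (j,i), Sum.inr j} : Set ((Fin k × Fin d) ⊕ Fin k))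
          ∩ {Sum.inl (l,i), Sum.inr l} = ∅ := by
      intro j l hjl
      apply Set.eq_empty_iff_forall_notMem.2
      rintro x ⟨hx1, hx2⟩
      simp only [Set.mem_insert_iff, Set.mem_singleton_iff] at hx1 hx2
      rcases hx1 with h | h <;> rcases hx2 with h' | h' <;> rw [h] at h' <;>
        simp only [Sum.inl.injEq, Sum.inr.injEq, Prod.mk.injEq, reduceCtorEq] at h'
      · exact hjl h'.1
      · exact hjl h'
    have hCmeas : ∀ j : Fin k,
        MeasurableSet[MeasurableSpace.comap (F' (Sum.inl (j,i))) inferInstance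
          ⊔ MeasurableSpace.comap (F' (Sum.inr j)) inferInstance] (C j) := by
      intro j
      refine MeasurableSet.compl (MeasurableSet.inter ?_ ?_)
      · exact (MeasurableSpace.le_def.1 le_sup_left) _ ⟨_, measurableSet_Icc, rfl⟩
      · exact (MeasurableSpace.le_def.1 le_sup_right) _ ⟨_, measurableSet_Icc, rfl⟩
    have hprod := grouped_prod_formula
      (m := fun x => MeasurableSpace.comap (F' x) inferInstance)
      (fun x => (hF'meas x).comap_le) hindep'.iIndep
      (fun j : Fin k => Sum.inl (j,i)) (fun j : Fin k => Sum.inr j) hinj C hCmeas Finset.univ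
    have hCj : ∀ j : Fin k, μ (C j) = ENNReal.ofReal (1 - ε^2/4) := by
      intro j
      have hAmeas : MeasurableSet
          (F' (Sum.inl (j,i)) ⁻¹' Set.Icc a₁ b₁ ∩ F' (Sum.inr j) ⁻¹' Set.Icc a₂ b₂) :=
        (hF'meas _ measurableSet_Icc).inter (hF'meas _ measurableSet_Icc)
      have hIF := hindep'.indepFun
        (show (Sum.inl (j,i) : (Fin k × Fin d) ⊕ Fin k) ≠ Sum.inr j by simp)
      have hval : μ (F' (Sum.inl (j,i)) ⁻¹' Set.Icc a₁ b₁ ∩ F' (Sum.inr j) ⁻¹' Set.Icc a₂ b₂)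
          = ENNReal.ofReal (ε^2/4) := by
        rw [hIF.meas_inter ⟨_, measurableSet_Icc, rfl⟩ ⟨_, measurableSet_Icc, rfl⟩,
          hmeasW j a₁ b₁ h₁ h₂ ha₁b₁, hmeasu j a₂ b₂ h₄ h₅ ha₂b₂, h₃, h₆,
          ← ENNReal.ofReal_mul (by positivity)]
        congr 1
        ring
      rw [hCdef]
      simp only
      rw [measure_compl hAmeas (measure_ne_top μ _), hval, measure_univ,
        ← ENNReal.ofReal_one, ← ENNReal.ofReal_sub _ (by positivity)]
    have hεp1 : ε^2/4 ≤ 1 := by nlinarith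
    have hreal : (1 - ε^2/4) ^ k ≤ δ/2 := by
      have hkp : Real.log (2/δ) ≤ (k:ℝ) * (ε^2/4) := by
        calc Real.log (2/δ) = (4/ε^2 * Real.log (2/δ)) * (ε^2/4) := by
              field_simp
            _ ≤ (k:ℝ) * (ε^2/4) := mul_le_mul_of_nonneg_right hk (by positivity)
      have := pow_bound hεp1 k hkp
      refine this.trans ?_
      rw [Real.exp_neg, Real.exp_log hδ2pos, inv_div]
    calc μ (⋂ j, C j) = μ (⋂ j ∈ Finset.univ, C j) := by simp
      _ = ∏ j, μ (C j) := hprod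
      _ = ENNReal.ofReal (1 - ε^2/4) ^ k := by
          rw [Finset.prod_congr rfl fun j _ => hCj j, Finset.prod_const, Finset.card_univ,
            Fintype.card_fin]
      _ = ENNReal.ofReal ((1 - ε^2/4) ^ k) := (ENNReal.ofReal_pow (by nlinarith) k).symm
      _ ≤ ENNReal.ofReal (δ/2) := ENNReal.ofReal_le_ofReal hreal
  -- the success events
  set A : Fin k → Set Ω :=
    fun j => {ω | W j ω i ∈ Set.Icc (1-ε) 1 ∧ u j ω ∈ Set.Icc ja jb} with hAdef
  set B : Fin k → Set Ω :=
    fun j => {ω | W j ω i ∈ Set.Icc (-1 : ℝ) (ε-1) ∧ u j ω ∈ Set.Icc ka kb} with hBdef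
  set A' : Fin k → Set Ω :=
    fun j => F' (Sum.inl (j,i)) ⁻¹' Set.Icc (1-ε) 1 ∩ F' (Sum.inr j) ⁻¹' Set.Icc ja jb
    with hA'def
  set B' : Fin k → Set Ω :=
    fun j => F' (Sum.inl (j,i)) ⁻¹' Set.Icc (-1 : ℝ) (ε-1) ∩ F' (Sum.inr j) ⁻¹' Set.Icc ka kb
    with hB'def
  have hAae : ∀ j : Fin k, ((A j)ᶜ : Set Ω) =ᵐ[μ] ((A' j)ᶜ : Set Ω) := by
    intro j
    rw [Filter.eventuallyEq_set]
    filter_upwards [hFae (Sum.inl (j,i)), hFae (Sum.inr j)] with ω h1 h2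
    have h1' : W j ω i = F' (Sum.inl (j,i)) ω := h1
    have h2' : u j ω = F' (Sum.inr j) ω := h2
    simp only [hAdef, hA'def, Set.mem_compl_iff, Set.mem_setOf_eq, Set.mem_inter_iff,
      Set.mem_preimage, h1', h2']
  have hBae : ∀ j : Fin k, ((B j)ᶜ : Set Ω) =ᵐ[μ] ((B' j)ᶜ : Set Ω) := by
    intro j
    rw [Filter.eventuallyEq_set]
    filter_upwards [hFae (Sum.inl (j,i)), hFae (Sum.inr j)] with ω h1 h2
    have h1' : W j ω i = F' (Sum.inl (j,i)) ω := h1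
    have h2' : u j ω = F' (Sum.inr j) ω := h2
    simp only [hBdef, hB'def, Set.mem_compl_iff, Set.mem_setOf_eq, Set.mem_inter_iff,
      Set.mem_preimage, h1', h2']
  have hAbound : μ ((⋃ j, A j)ᶜ) ≤ ENNReal.ofReal (δ/2) := by
    rw [Set.compl_iUnion, measure_congr (iInter_ae_congr hAae)]
    exact hmain (1-ε) 1 ja jb (by linarith) le_rfl (by ring) hja hjb hjlen
  have hBbound : μ ((⋃ j, B j)ᶜ) ≤ ENNReal.ofReal (δ/2) := by
    rw [Set.compl_iUnion, measure_congr (iInter_ae_congr hBae)]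
    exact hmain (-1) (ε-1) ka kb le_rfl (by linarith) (by ring) hka hkb hklen
  -- inclusion into the target event
  have hsub : ((⋃ j, A j) ∩ ⋃ j, B j) ⊆ {ω | ∃ b : Fin k → Fin d → ℝ,
      (∀ j t, b j t = 0 ∨ b j t = 1) ∧
      (∀ x : Fin d → ℝ, (∀ t, |x t| ≤ 1) →
        |(∑ j, u j ω * relu (∑ t, W j ω t * b j t * x t)) - α * x i| ≤ 2 * ε) ∧
      (∑ j, l0 (b j)) ≤ 2 ∧ (∀ j, l0 (b j) ≤ 1)} := by
    rintro ω ⟨hA, hB⟩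
    obtain ⟨j₁, h₁⟩ := Set.mem_iUnion.1 hA
    obtain ⟨j₂, h₂⟩ := Set.mem_iUnion.1 hB
    exact mask_construction i α ε hε hε2 (fun j t => W j ω t) (fun j => u j ω)
      ja jb ka kb hJprop hKprop j₁ j₂ h₁.1 h₁.2 h₂.1 h₂.2
  -- conclude
  have hcompl : μ (((⋃ j, A j) ∩ ⋃ j, B j)ᶜ) ≤ ENNReal.ofReal δ := by
    rw [Set.compl_inter]
    refine (measure_union_le _ _).trans ((add_le_add hAbound hBbound).trans ?_)
    rw [← ENNReal.ofReal_add (by positivity) (by positivity)]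
    exact ENNReal.ofReal_le_ofReal (by linarith)
  have hS : ENNReal.ofReal (1 - δ) ≤ μ ((⋃ j, A j) ∩ ⋃ j, B j) := by
    have h1 : (1:ENNReal) ≤ μ ((⋃ j, A j) ∩ ⋃ j, B j) + μ (((⋃ j, A j) ∩ ⋃ j, B j)ᶜ) := by
      rw [← measure_univ (μ := μ), ← Set.union_compl_self ((⋃ j, A j) ∩ ⋃ j, B j)]
      exact measure_union_le _ _
    have h2 : (1:ENNReal) ≤ μ ((⋃ j, A j) ∩ ⋃ j, B j) + ENNReal.ofReal δ :=
      h1.trans (add_le_add_right hcompl _)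
    have e : ENNReal.ofReal (1 - δ) + ENNReal.ofReal δ = 1 := by
      rw [← ENNReal.ofReal_add (by linarith) hδ.le]
      norm_num
    exact (ENNReal.add_le_add_iff_right ENNReal.ofReal_ne_top).1 (by rw [e]; exact h2)
  exact hS.trans (measure_mono hsub)
end

section
/- Fix s ∈ [d], vectors w⁽¹⁾*,…,w⁽ⁿ⁾* ∈ [-1/√s, 1/√s]ᵈ each with ‖w⁽ⁱ⁾*‖₀ ≤ s, and let F : ℝᵈ → ℝⁿ be defined by F(x)ᵢ = σ(⟨w⁽ⁱ⁾*, x⟩). Sample w⁽¹⁾,…,w⁽ᵏ⁾ i.i.d. uniform on [-1,1]ᵈ and u⁽¹⁾,…,u⁽ⁿ⁾ i.i.d. uniform on [-1,1]ᵏ. If k ≥ n·s·⌈(16s²n/ε²)·log(2ns/δ)⌉, then with probability at least 1-δ there exist binary masks b⁽¹⁾,…,b⁽ᵏ⁾ ∈ {0,1}ᵈ and b̃⁽¹⁾,…,b̃⁽ⁿ⁾ ∈ {0,1}ᵏ such that G(x)ᵢ = σ(Σⱼ b̃⁽ⁱ⁾ⱼ u⁽ⁱ⁾ⱼ σ(⟨w⁽ʲ⁾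 ⊙ b⁽ʲ⁾, x⟩)) satisfies ‖G(x) - F(x)‖₂ ≤ ε for all ‖x‖_∞ ≤ 1, with Σⱼ ‖b⁽ʲ⁾‖₀ ≤ 2sn and Σᵢ ‖b̃⁽ⁱ⁾‖₀ ≤ 2sn. -/
open MeasureTheory ProbabilityTheory Real
open scoped Classical

noncomputable def l2norm {d : ℕ} (x : Fin d → ℝ) : ℝ := Real.sqrt (∑ t, (x t) ^ 2)

/- ### Auxiliary lemmas -/

lemma relu_mul {a x : ℝ} (h : 0 ≤ a) : relu (a*x) = a * relu x := by
  unfold relu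
  rw [mul_max_of_nonneg _ _ h, mul_zero]

lemma relu_sub (x : ℝ) : relu x - relu (-x) = x := by
  unfold relu; rcases le_total x 0 with h|h
  · rw [max_eq_right h, max_eq_left (by linarith)]; ring
  · rw [max_eq_left h, max_eq_right (by linarith)]; ring

lemma relu_addabs (x : ℝ) : relu x + relu (-x) = |x| := by
  unfold relu; rcases le_total x 0 with h|h
  · rw [max_eq_right h, max_eq_left (by linarith), abs_of_nonpos h]; ring
  · rw [max_eq_left h, max_eq_right (by linarith), abs_of_nonneg h]; ring

lemma relu_lip (a b : ℝ) : |relu a - relu b| ≤ |a - b| := abs_max_sub_max_le_abs a b 0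

lemma relu_nonneg (x : ℝ) : 0 ≤ relu x := le_max_right _ _

lemma relu_abs_le (x : ℝ) : |relu x| ≤ |x| := by
  rw [abs_of_nonneg (relu_nonneg x)]
  unfold relu
  rcases le_total x 0 with h|h
  · rw [max_eq_right h]; exact abs_nonneg x
  · rw [max_eq_left h]; exact le_abs_self x

lemma l2norm_le {n : ℕ} (v : Fin n → ℝ) (c : ℝ) (hc : 0 ≤ c) (h : ∀ i, |v i| ≤ c) :
    l2norm v ≤ Real.sqrt n * c := by
  unfold l2norm
  have h1 : ∑ i, (v i)^2 ≤ (n : ℝ) * c^2 := by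
    calc ∑ i, (v i)^2 ≤ ∑ _i : Fin n, c^2 := by
          refine Finset.sum_le_sum fun i _ => ?_
          rw [← sq_abs]
          exact pow_le_pow_left₀ (abs_nonneg _) (h i) 2
      _ = (n : ℝ) * c^2 := by simp [mul_comm]
  calc Real.sqrt (∑ i, (v i)^2) ≤ Real.sqrt ((n:ℝ) * c^2) := Real.sqrt_le_sqrt h1
    _ = Real.sqrt n * c := by
        rw [Real.sqrt_mul (Nat.cast_nonneg n), Real.sqrt_sq hc]

lemma unif_Icc_apply {a b : ℝ} (hab : a ≤ b) (h1 : (-1:ℝ) ≤ a) (h2 : b ≤ 1) :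
    unif (Set.Icc (-1:ℝ) 1) (Set.Icc a b) = ENNReal.ofReal ((b-a)/2) := by
  unfold unif
  rw [Measure.smul_apply, Measure.restrict_apply measurableSet_Icc,
    Set.inter_eq_left.2 (Set.Icc_subset_Icc h1 h2), Real.volume_Icc, Real.volume_Icc,
    smul_eq_mul]
  rw [show (1:ℝ) - (-1) = 2 by norm_num, mul_comm, ← div_eq_mul_inv,
    ← ENNReal.ofReal_div_of_pos (by norm_num)]

lemma rect_true (c g : ℝ) (hc : |c| ≤ 1) (h0 : 0 < g) (h1 : g < 1) :
    ∃ a u : ℝ, -1 ≤ a ∧ a + g/2 ≤ 1 ∧ -1 ≤ u ∧ u + g/2 ≤ 1 ∧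
      (∀ w, a ≤ w → w ≤ a + g/2 → 0 < w) ∧
      ∀ w v : ℝ, a ≤ w → w ≤ a + g/2 → u ≤ v → v ≤ u + g/2 → |v*w - c| ≤ g := by
  rw [abs_le] at hc
  by_cases hc1 : 1 - g/4 < c
  · refine ⟨1 - g/2, 1 - g/2, by linarith, by linarith, by linarith, by linarith,
      fun w hw1 hw2 => by linarith, fun w v hw1 hw2 hv1 hv2 => ?_⟩
    rw [abs_le]; constructor <;> nlinarith
  · by_cases hc2 : c < -(1 - g/4)
    · refine ⟨1 - g/2, -1, by linarith, by linarith, by linarith, by linarith,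
        fun w hw1 hw2 => by linarith, fun w v hw1 hw2 hv1 hv2 => ?_⟩
      rw [abs_le]; constructor <;>
        nlinarith [mul_nonneg (by linarith : (0:ℝ) ≤ -v) (by linarith : (0:ℝ) ≤ 1 - w),
          mul_nonneg (by linarith : (0:ℝ) ≤ -v) (by linarith : (0:ℝ) ≤ w)]
    · push_neg at hc1 hc2
      refine ⟨1 - g/2, c - g/4, by linarith, by linarith, by linarith, by linarith,
        fun w hw1 hw2 => by linarith, fun w v hw1 hw2 hv1 hv2 => ?_⟩
      rw [abs_le]; constructor <;>
        nlinarith [mul_nonneg (by linarith : (0:ℝ) ≤ 1 - w) (by linarith : (0:ℝ) ≤ 1 - v),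
          mul_nonneg (by linarith : (0:ℝ) ≤ 1 - w) (by linarith : (0:ℝ) ≤ 1 + v)]

lemma rect (c g : ℝ) (hc : |c| ≤ 1) (h0 : 0 < g) (h1 : g < 1) (sg : Bool) :
    ∃ a u : ℝ, -1 ≤ a ∧ a + g/2 ≤ 1 ∧ -1 ≤ u ∧ u + g/2 ≤ 1 ∧
      (∀ w, a ≤ w → w ≤ a + g/2 → (if sg then 0 < w else w < 0)) ∧
      ∀ w v : ℝ, a ≤ w → w ≤ a + g/2 → u ≤ v → v ≤ u + g/2 → |v*w - c| ≤ g := by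
  obtain ⟨a, u, ha1, ha2, hu1, hu2, hpos, hprod⟩ := rect_true c g hc h0 h1
  cases sg
  · refine ⟨-(a + g/2), -(u + g/2), by linarith, by linarith, by linarith, by linarith,
      fun w hw1 hw2 => by simpa using by nlinarith [hpos (-w) (by linarith) (by linarith)],
      fun w v hw1 hw2 hv1 hv2 => ?_⟩
    have := hprod (-w) (-v) (by linarith) (by linarith) (by linarith) (by linarith)
    simpa [neg_mul_neg] using this
  · exact ⟨a, u, ha1, ha2, hu1, hu2, fun w hw1 hw2 => by simpa using hpos w hw1 hw2, hprod⟩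

lemma key_prod {Ω : Type*} [MeasurableSpace Ω] (μ : Measure Ω) {k d n : ℕ}
    (W : Fin k → Ω → (Fin d → ℝ)) (U : Fin n → Ω → (Fin k → ℝ))
    (hindep : iIndepFun
      (Sum.elim (fun p : Fin k × Fin d => fun ω => W p.1 ω p.2)
        (fun p : Fin n × Fin k => fun ω => U p.1 ω p.2)) μ)
    (i : Fin n) (t : Fin d) (Iw Iu : Set ℝ) (hIw : MeasurableSet Iw) (hIu : MeasurableSet Iu)
    (T : Finset (Fin k)) :
    μ (⋂ j ∈ T, ((fun ω => W j ω t) ⁻¹' Iw ∩ (fun ω => U i ω j) ⁻¹' Iu))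
      = ∏ j ∈ T, (μ ((fun ω => W j ω t) ⁻¹' Iw) * μ ((fun ω => U i ω j) ⁻¹' Iu)) := by
  classical
  set F : (Fin k × Fin d) ⊕ (Fin n × Fin k) → Set Ω :=
    Sum.elim (fun p => (fun ω => W p.1 ω p.2) ⁻¹' Iw) (fun p => (fun ω => U p.1 ω p.2) ⁻¹' Iu)
    with hF
  set S := T.image (fun j => Sum.inl (j, t)) ∪
    T.image (fun j => (Sum.inr (i, j) : (Fin k × Fin d) ⊕ (Fin n × Fin k))) with hS
  have hmeas : ∀ p ∈ S, MeasurableSet[(inferInstance : MeasurableSpace ℝ).comap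
      (Sum.elim (fun p : Fin k × Fin d => fun ω => W p.1 ω p.2)
        (fun p : Fin n × Fin k => fun ω => U p.1 ω p.2) p)] (F p) := by
    rintro (p|p) _
    · exact ⟨Iw, hIw, rfl⟩
    · exact ⟨Iu, hIu, rfl⟩
  have h1 := hindep.meas_biInter hmeas
  have hinj1 : Set.InjOn (fun j : Fin k =>
      (Sum.inl (j, t) : (Fin k × Fin d) ⊕ (Fin n × Fin k))) T := by
    intro a _ b _ h; simpa using h
  have hinj2 : Set.InjOn (fun j : Fin k =>
      (Sum.inr (i, j) : (Fin k × Fin d) ⊕ (Fin n × Fin k))) T := by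
    intro a _ b _ h; simpa using h
  have hdisj : Disjoint
      (T.image (fun j => (Sum.inl (j, t) : (Fin k × Fin d) ⊕ (Fin n × Fin k))))
      (T.image (fun j => (Sum.inr (i, j) : (Fin k × Fin d) ⊕ (Fin n × Fin k)))) := by
    rw [Finset.disjoint_left]; intro p hp hq
    simp only [Finset.mem_image] at hp hq
    obtain ⟨a, _, ha⟩ := hp; obtain ⟨b, _, hb⟩ := hq
    rw [← ha] at hb; simp at hb
  have hset : (⋂ p ∈ S, F p)
      = ⋂ j ∈ T, ((fun ω => W j ω t) ⁻¹' Iw ∩ (fun ω => U i ω j) ⁻¹' Iu) := by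
    ext ω
    simp only [Set.mem_iInter, hS, Finset.mem_union, Finset.mem_image, Set.mem_inter_iff]
    constructor
    · intro h j hj
      exact ⟨h _ (Or.inl ⟨j, hj, rfl⟩), h _ (Or.inr ⟨j, hj, rfl⟩)⟩
    · rintro h p (⟨j, hj, rfl⟩ | ⟨j, hj, rfl⟩)
      · exact (h j hj).1
      · exact (h j hj).2
  rw [hset] at h1
  rw [h1, hS, Finset.prod_union hdisj, Finset.prod_image hinj1, Finset.prod_image hinj2,
    ← Finset.prod_mul_distrib]
  rfl

lemma compl_prod {Ω : Type*} [MeasurableSpace Ω] (μ : Measure Ω) [IsProbabilityMeasure μ]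
    {ι : Type*} (C : ι → Set Ω) (hmeas : ∀ j, MeasurableSet (C j))
    (hprod : ∀ T : Finset ι, μ (⋂ j ∈ T, C j) = ∏ j ∈ T, μ (C j))
    (T : Finset ι) : μ (⋂ j ∈ T, (C j)ᶜ) = ∏ j ∈ T, (1 - μ (C j)) := by
  have hind : ProbabilityTheory.iIndepSet C μ :=
    (ProbabilityTheory.iIndepSet_iff_meas_biInter hmeas).2 hprod
  have h1 := (ProbabilityTheory.iIndepSet_iff_iIndep C μ).1 hind
  have h2 := h1.meas_biInter (S := T) (s := fun j => (C j)ᶜ)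
    (fun j _ => (MeasurableSpace.measurableSet_generateFrom (Set.mem_singleton _)).compl)
  rw [h2]
  exact Finset.prod_congr rfl fun j _ => prob_compl_eq_one_sub (hmeas j)


lemma pow_bound_s5 {q L : ℝ} (m : ℕ) (hq0 : 0 < q) (hq1 : q < 1) (hL : L ≤ q * m) :
    (1 - q)^m ≤ Real.exp (-L) := by
  have e1 : (1 - q) ≤ Real.exp (-q) := by
    have := Real.add_one_le_exp (-q); linarith
  calc (1 - q)^m ≤ (Real.exp (-q))^m := pow_le_pow_left₀ (by linarith) e1 m
    _ = Real.exp (-q * m) := by rw [← Real.exp_nat_mul]; congr 1; ring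
    _ ≤ Real.exp (-L) := by apply Real.exp_le_exp.2; nlinarith

lemma hLm_aux {g L mr : ℝ} (hg : 0 < g) (h : 16/g^2 * L ≤ mr) : L ≤ g^2/16 * mr := by
  have h2 := mul_le_mul_of_nonneg_left h (by positivity : (0:ℝ) ≤ g^2/16)
  have h3 : g^2/16 * (16/g^2 * L) = L := by field_simp
  linarith

lemma sixteen_aux {sr nr e : ℝ} (hs : 0 < sr) (hn : 0 < nr) (he : 0 < e) :
    16 / ((e / (sr * Real.sqrt nr))^2) = 16 * sr^2 * nr / e^2 := by
  rw [div_pow, mul_pow, Real.sq_sqrt hn.le, div_div_eq_mul_div]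
  ring

lemma block_fail {Ω : Type*} [MeasurableSpace Ω] (μ : MeasureTheory.Measure Ω)
    [MeasureTheory.IsProbabilityMeasure μ] {k : ℕ} (q δ2 : ℝ) (hq0 : 0 < q) (hq1 : q < 1)
    (m : ℕ) (hbound : (1-q)^m ≤ δ2)
    (C : Fin k → Set Ω) (hCmeas : ∀ j, MeasurableSet (C j))
    (hCprod : ∀ T : Finset (Fin k), μ (⋂ j ∈ T, C j) = ∏ j ∈ T, μ (C j))
    (hCval : ∀ j, μ (C j) = ENNReal.ofReal q)
    (T : Finset (Fin k)) (hTcard : T.card = m) :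
    μ ((⋃ j ∈ T, C j)ᶜ) ≤ ENNReal.ofReal δ2 := by
  have h1 : ((⋃ j ∈ T, C j)ᶜ) = ⋂ j ∈ T, (C j)ᶜ := by
    simp [Set.compl_iUnion]
  rw [h1, compl_prod μ C hCmeas hCprod T]
  have h2 : ∀ j ∈ T, (1 : ENNReal) - μ (C j) = ENNReal.ofReal (1 - q) := by
    intro j _
    rw [hCval j, ← ENNReal.ofReal_one, ← ENNReal.ofReal_sub _ (le_of_lt hq0)]
  rw [Finset.prod_congr rfl h2, Finset.prod_const, hTcard,
    ← ENNReal.ofReal_pow (by linarith)]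
  exact ENNReal.ofReal_le_ofReal hbound

set_option maxHeartbeats 2000000 in
/-- a single ReLU layer `F(x)ᵢ = σ(⟨w⁽ⁱ⁾*,x⟩)` with `n` neurons and
`s`-sparse weights bounded by `1/√s` is uniformly `ε`-approximated (in Euclidean
norm, on `‖x‖_∞ ≤ 1`), with probability at least `1-δ`, by pruning the weights of
a random two-layer ReLU network with i.i.d. uniform weights, for
`k ≥ n·s·⌈(16s²n/ε²)·log(2ns/δ)⌉`, with `Σⱼ‖b⁽ʲ⁾‖₀ ≤ 2sn` and `Σᵢ‖b̃⁽ⁱ⁾‖₀ ≤ 2sn`. -/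
theorem relu_layer_by_pruning
    (d s n k : ℕ) (hd : 0 < d) (hn : 0 < n) (hs1 : 1 ≤ s) (hsd : s ≤ d)
    (wstar : Fin n → Fin d → ℝ) (hwstar : ∀ r t, |wstar r t| ≤ 1 / Real.sqrt s)
    (hsparse : ∀ r, l0 (wstar r) ≤ s)
    (ε δ : ℝ) (hε : 0 < ε) (hδ : 0 < δ)
    {Ω : Type*} [MeasurableSpace Ω] (μ : Measure Ω) [IsProbabilityMeasure μ]
    (W : Fin k → Ω → (Fin d → ℝ)) (U : Fin n → Ω → (Fin k → ℝ))
    (hindep : iIndepFun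
      (Sum.elim (fun p : Fin k × Fin d => fun ω => W p.1 ω p.2)
        (fun p : Fin n × Fin k => fun ω => U p.1 ω p.2)) μ)
    (hWdist : ∀ (j : Fin k) (t : Fin d),
      μ.map (fun ω => W j ω t) = unif (Set.Icc (-1 : ℝ) 1))
    (hUdist : ∀ (i : Fin n) (j : Fin k),
      μ.map (fun ω => U i ω j) = unif (Set.Icc (-1 : ℝ) 1))
    (hk : (n : ℝ) * s * ⌈16 * (s : ℝ) ^ 2 * n / ε ^ 2 *
      Real.log (2 * n * s / δ)⌉₊ ≤ (k : ℝ)) :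
    ENNReal.ofReal (1 - δ) ≤ μ {ω | ∃ (b : Fin k → Fin d → ℝ)
        (btil : Fin n → Fin k → ℝ),
      (∀ j t, b j t = 0 ∨ b j t = 1) ∧ (∀ i j, btil i j = 0 ∨ btil i j = 1) ∧
      (∀ x : Fin d → ℝ, (∀ t, |x t| ≤ 1) →
        l2norm (fun i =>
          relu (∑ j, btil i j * U i ω j * relu (∑ t, W j ω t * b j t * x t)) -
            relu (∑ t, wstar i t * x t)) ≤ ε) ∧
      (∑ j, l0 (b j)) ≤ 2 * s * n ∧ (∑ i, l0 (btil i)) ≤ 2 * s * n} := by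
  -- basic positivity facts
  have hsr : (0:ℝ) < s := by exact_mod_cast hs1
  have hnr : (0:ℝ) < n := by exact_mod_cast hn
  have hsqn : (0:ℝ) < Real.sqrt n := Real.sqrt_pos.2 hnr
  have hsqs : (0:ℝ) < Real.sqrt s := Real.sqrt_pos.2 hsr
  have hca : ∀ i t, |wstar i t| ≤ 1 := by
    intro i t
    refine (hwstar i t).trans ?_
    rw [div_le_one hsqs]
    have : (1:ℝ) ≤ (s:ℝ) := by exact_mod_cast hs1
    nlinarith [Real.sq_sqrt (le_of_lt hsr), Real.sqrt_nonneg (s:ℝ)]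
  by_cases hδ1 : 1 ≤ δ
  · have h0 : ENNReal.ofReal (1 - δ) = 0 := ENNReal.ofReal_eq_zero.2 (by linarith)
    rw [h0]; exact zero_le
  push_neg at hδ1
  set g := ε / ((s:ℝ) * Real.sqrt n) with hgdef
  have hg0 : 0 < g := div_pos hε (by positivity)
  have hsqs_le : Real.sqrt s ≤ (s:ℝ) := by
    have h1s : (1:ℝ) ≤ (s:ℝ) := by exact_mod_cast hs1
    have h1 : (s:ℝ) ≤ (s:ℝ)^2 := by nlinarith
    calc Real.sqrt s ≤ Real.sqrt ((s:ℝ)^2) := Real.sqrt_le_sqrt h1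
      _ = (s:ℝ) := Real.sqrt_sq (le_of_lt hsr)
  -- bound on the target inner products
  have hinner : ∀ (i : Fin n) (x : Fin d → ℝ), (∀ t, |x t| ≤ 1) →
      |∑ t, wstar i t * x t| ≤ Real.sqrt s := by
    intro i x hx
    have h1 : |∑ t, wstar i t * x t| ≤ ∑ t, |wstar i t * x t| :=
      Finset.abs_sum_le_sum_abs _ _
    have h2 : ∀ t, |wstar i t * x t| ≤ |wstar i t| := by
      intro t
      rw [abs_mul]
      exact mul_le_of_le_one_right (abs_nonneg _) (hx t)
    have h3 : (∑ t, |wstar i t|) =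
        ∑ t ∈ Finset.univ.filter (fun t => wstar i t ≠ 0), |wstar i t| := by
      refine (Finset.sum_subset (Finset.filter_subset _ _) ?_).symm
      intro t _ ht
      simp only [Finset.mem_filter, Finset.mem_univ, true_and, not_not] at ht
      simp [ht]
    have h4 : (∑ t ∈ Finset.univ.filter (fun t => wstar i t ≠ 0), |wstar i t|)
        ≤ (Finset.univ.filter (fun t => wstar i t ≠ 0) : Finset (Fin d)).card
          * (1 / Real.sqrt s) := by
      refine Finset.sum_le_card_nsmul _ _ _ (fun t _ => hwstar i t) |>.trans ?_
      rw [nsmul_eq_mul]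
    have h5 : ((Finset.univ.filter (fun t => wstar i t ≠ 0) : Finset (Fin d)).card : ℝ)
        ≤ (s:ℝ) := by exact_mod_cast hsparse i
    calc |∑ t, wstar i t * x t| ≤ ∑ t, |wstar i t| := h1.trans (Finset.sum_le_sum fun t _ => h2 t)
      _ ≤ (s:ℝ) * (1 / Real.sqrt s) := by
          rw [h3]
          refine h4.trans ?_
          exact mul_le_mul_of_nonneg_right h5 (by positivity)
      _ = Real.sqrt s := by
          rw [mul_one_div, Real.div_sqrt]
  by_cases hgbig : 1 ≤ g
  · -- trivial: zero masks work deterministically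
    have hall : Set.univ ⊆ {ω : Ω | ∃ (b : Fin k → Fin d → ℝ)
        (btil : Fin n → Fin k → ℝ),
      (∀ j t, b j t = 0 ∨ b j t = 1) ∧ (∀ i j, btil i j = 0 ∨ btil i j = 1) ∧
      (∀ x : Fin d → ℝ, (∀ t, |x t| ≤ 1) →
        l2norm (fun i =>
          relu (∑ j, btil i j * U i ω j * relu (∑ t, W j ω t * b j t * x t)) -
            relu (∑ t, wstar i t * x t)) ≤ ε) ∧
      (∑ j, l0 (b j)) ≤ 2 * s * n ∧ (∑ i, l0 (btil i)) ≤ 2 * s * n} := by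
      intro ω _
      refine ⟨fun _ _ => 0, fun _ _ => 0, fun _ _ => Or.inl rfl, fun _ _ => Or.inl rfl,
        ?_, by simp [l0], by simp [l0]⟩
      intro x hx
      have hbound : ∀ i, |relu (∑ j, (0:ℝ) * U i ω j * relu (∑ t, W j ω t * 0 * x t)) -
          relu (∑ t, wstar i t * x t)| ≤ Real.sqrt s := by
        intro i
        have h0 : (∑ j, (0:ℝ) * U i ω j * relu (∑ t, W j ω t * 0 * x t)) = 0 := by simp
        rw [h0, show relu 0 = 0 from by simp [relu], zero_sub, abs_neg]
        exact (relu_abs_le _).trans (hinner i x hx)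
      have := l2norm_le _ _ (Real.sqrt_nonneg (s:ℝ)) hbound
      refine this.trans ?_
      have : Real.sqrt n * Real.sqrt s ≤ Real.sqrt n * (s:ℝ) :=
        mul_le_mul_of_nonneg_left hsqs_le (Real.sqrt_nonneg _)
      refine this.trans ?_
      have hε' : ε = g * ((s:ℝ) * Real.sqrt n) := by
        rw [hgdef, div_mul_cancel₀]
        positivity
      rw [hε']
      nlinarith [mul_le_mul_of_nonneg_right hgbig (by positivity : (0:ℝ) ≤ (s:ℝ) * Real.sqrt n)]
    calc ENNReal.ofReal (1 - δ) ≤ 1 := ENNReal.ofReal_le_one.2 (by linarith)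
      _ = μ Set.univ := (measure_univ).symm
      _ ≤ _ := measure_mono hall
  push_neg at hgbig
  -- main case
  have hL : 0 < Real.log (2 * (n:ℝ) * s / δ) := by
    apply Real.log_pos
    rw [lt_div_iff₀ hδ, one_mul]
    have h1n : (1:ℝ) ≤ n := by exact_mod_cast hn
    have h1s' : (1:ℝ) ≤ s := by exact_mod_cast hs1
    nlinarith
  set m := ⌈16 * (s : ℝ) ^ 2 * n / ε ^ 2 * Real.log (2 * n * s / δ)⌉₊ with hmdef
  have hm1 : (16 * (s : ℝ) ^ 2 * n / ε ^ 2 * Real.log (2 * n * s / δ)) ≤ m := Nat.le_ceil _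
  have hkm : s * m * n ≤ k := by
    have h2 : ((n * s * m : ℕ) : ℝ) ≤ (k:ℝ) := by push_cast; linarith [hk]
    have h3 : n * s * m ≤ k := by exact_mod_cast h2
    calc s * m * n = n * s * m := by ring
      _ ≤ k := h3
  -- a.e. measurability of coordinates
  have hWae : ∀ (j : Fin k) (t : Fin d), AEMeasurable (fun ω => W j ω t) μ := by
    intro j t; by_contra h
    have h0 := MeasureTheory.Measure.map_of_not_aemeasurable (μ := μ) (f := fun ω => W j ω t) h
    rw [hWdist j t] at h0
    have h2 := congrArg (fun ν : Measure ℝ => ν (Set.Icc (-1:ℝ) 1)) h0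
    simp only [unif_Icc_apply (by norm_num : (-1:ℝ) ≤ 1) le_rfl le_rfl] at h2
    norm_num at h2
  have hUae : ∀ (i : Fin n) (j : Fin k), AEMeasurable (fun ω => U i ω j) μ := by
    intro i j; by_contra h
    have h0 := MeasureTheory.Measure.map_of_not_aemeasurable (μ := μ) (f := fun ω => U i ω j) h
    rw [hUdist i j] at h0
    have h2 := congrArg (fun ν : Measure ℝ => ν (Set.Icc (-1:ℝ) 1)) h0
    simp only [unif_Icc_apply (by norm_num : (-1:ℝ) ≤ 1) le_rfl le_rfl] at h2
    norm_num at h2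
  have hW'ex : ∀ (j : Fin k) (t : Fin d), ∃ f : Ω → ℝ, Measurable f ∧
      (fun ω => W j ω t) =ᵐ[μ] f :=
    fun j t => ⟨(hWae j t).mk _, (hWae j t).measurable_mk, (hWae j t).ae_eq_mk⟩
  have hU'ex : ∀ (i : Fin n) (j : Fin k), ∃ f : Ω → ℝ, Measurable f ∧
      (fun ω => U i ω j) =ᵐ[μ] f :=
    fun i j => ⟨(hUae i j).mk _, (hUae i j).measurable_mk, (hUae i j).ae_eq_mk⟩
  choose W' hW'meas hW'ae using hW'ex
  choose U' hU'meas hU'ae using hU'ex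
  set N : Set Ω := (⋃ j, ⋃ t, {ω | W j ω t ≠ W' j t ω}) ∪
    (⋃ i, ⋃ j, {ω | U i ω j ≠ U' i j ω}) with hNdef
  have hN0 : μ N = 0 := by
    rw [hNdef]
    apply measure_union_null <;>
      refine measure_iUnion_null fun a => measure_iUnion_null fun b => ?_
    · exact ae_iff.1 (hW'ae a b)
    · exact ae_iff.1 (hU'ae a b)
  have hNae : ∀ᵐ ω ∂μ, ω ∉ N := by
    rw [ae_iff]; simpa [not_not] using hN0
  have meqN : ∀ X Y : Set Ω, (∀ ω, ω ∉ N → (ω ∈ X ↔ ω ∈ Y)) → μ X = μ Y := by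
    intro X Y h
    apply measure_congr
    rw [Filter.eventuallyEq_set]
    filter_upwards [hNae] with ω hω using h ω hω
  have hNW : ∀ ω, ω ∉ N → ∀ j t, W j ω t = W' j t ω := by
    intro ω hω j t
    by_contra hne
    exact hω (Or.inl (Set.mem_iUnion.2 ⟨j, Set.mem_iUnion.2 ⟨t, hne⟩⟩))
  have hNU : ∀ ω, ω ∉ N → ∀ i j, U i ω j = U' i j ω := by
    intro ω hω i j
    by_contra hne
    exact hω (Or.inr (Set.mem_iUnion.2 ⟨i, Set.mem_iUnion.2 ⟨j, hne⟩⟩))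
  -- rectangles
  choose ap up hap1 hap2 hup1 hup2 hwp hprodp using
    fun p : Fin n × Fin d => rect (wstar p.1 p.2) g (hca p.1 p.2) hg0 hgbig true
  choose am um ham1 ham2 hum1 hum2 hwm hprodm using
    fun p : Fin n × Fin d => rect (wstar p.1 p.2) g (hca p.1 p.2) hg0 hgbig false
  have hwp' : ∀ p w, ap p ≤ w → w ≤ ap p + g/2 → 0 < w := by
    intro p w h1 h2; have := hwp p w h1 h2; simpa using this
  have hwm' : ∀ p w, am p ≤ w → w ≤ am p + g/2 → w < 0 := by
    intro p w h1 h2; have := hwm p w h1 h2; simpa using this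
  -- support sets
  set S : Fin n → Finset (Fin d) := fun i => Finset.univ.filter (fun t => wstar i t ≠ 0)
    with hSdef
  have hScard : ∀ i, (S i).card ≤ s := by
    intro i; have := hsparse i; simpa [l0, hSdef] using this
  have hzero : ∀ i t, t ∉ S i → wstar i t = 0 := by
    intro i t ht
    by_contra h
    exact ht (Finset.mem_filter.2 ⟨Finset.mem_univ _, h⟩)
  -- block maps
  set blk : Fin n → Fin s → Fin m → Fin k := fun i q r =>
    Fin.castLE hkm (finProdFinEquiv (finProdFinEquiv (q, r), i)) with hblkdef
  have blk_inj : ∀ {i q r i' q' r'}, blk i q r = blk i' q' r' → i = i' ∧ q = q' ∧ r = r' := by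
    intro i q r i' q' r' h
    simp only [hblkdef] at h
    have h1 := Fin.castLE_injective _ h
    have h2 := finProdFinEquiv.injective h1
    rw [Prod.mk.injEq] at h2
    have h3 := finProdFinEquiv.injective h2.1
    rw [Prod.mk.injEq] at h3
    exact ⟨h2.2, h3.1, h3.2⟩
  set qof : Fin n → Fin d → Fin s := fun i t =>
    if ht : t ∈ S i then Fin.castLE (hScard i) (((S i).orderIsoOfFin rfl).symm ⟨t, ht⟩)
    else ⟨0, hs1⟩ with hqofdef
  have qof_inj : ∀ i t t', t ∈ S i → t' ∈ S i → qof i t = qof i t' → t = t' := by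
    intro i t t' ht ht' h
    simp only [hqofdef, dif_pos ht, dif_pos ht'] at h
    have h1 := Fin.castLE_injective _ h
    have h2 := ((S i).orderIsoOfFin rfl).symm.injective h1
    exact congrArg Subtype.val h2
  set J : Fin n → Fin d → Finset (Fin k) := fun i t =>
    Finset.image (fun r => blk i (qof i t) r) Finset.univ with hJdef
  have hJcard : ∀ i t, (J i t).card = m := by
    intro i t
    rw [hJdef]
    rw [Finset.card_image_of_injective _ (fun r r' h => (blk_inj h).2.2)]
    simp
  -- events
  set Cp : Fin n → Fin d → Fin k → Set Ω := fun i t j =>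
    (W' j t) ⁻¹' (Set.Icc (ap (i,t)) (ap (i,t) + g/2)) ∩
      (U' i j) ⁻¹' (Set.Icc (up (i,t)) (up (i,t) + g/2)) with hCpdef
  set Cm : Fin n → Fin d → Fin k → Set Ω := fun i t j =>
    (W' j t) ⁻¹' (Set.Icc (am (i,t)) (am (i,t) + g/2)) ∩
      (U' i j) ⁻¹' (Set.Icc (um (i,t)) (um (i,t) + g/2)) with hCmdef
  have hCpmeas : ∀ i t j, MeasurableSet (Cp i t j) := fun i t j =>
    ((hW'meas j t) measurableSet_Icc).inter ((hU'meas i j) measurableSet_Icc)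
  have hCmmeas : ∀ i t j, MeasurableSet (Cm i t j) := fun i t j =>
    ((hW'meas j t) measurableSet_Icc).inter ((hU'meas i j) measurableSet_Icc)
  -- marginal measures
  have hWIcc : ∀ (j : Fin k) (t : Fin d) {a b : ℝ}, -1 ≤ a → a ≤ b → b ≤ 1 →
      μ ((fun ω => W j ω t) ⁻¹' Set.Icc a b) = ENNReal.ofReal ((b-a)/2) := by
    intro j t a b h1 h2 h3
    rw [← Measure.map_apply_of_aemeasurable (hWae j t) measurableSet_Icc, hWdist j t,
      unif_Icc_apply h2 h1 h3]
  have hUIcc : ∀ (i : Fin n) (j : Fin k) {a b : ℝ}, -1 ≤ a → a ≤ b → b ≤ 1 →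
      μ ((fun ω => U i ω j) ⁻¹' Set.Icc a b) = ENNReal.ofReal ((b-a)/2) := by
    intro i j a b h1 h2 h3
    rw [← Measure.map_apply_of_aemeasurable (hUae i j) measurableSet_Icc, hUdist i j,
      unif_Icc_apply h2 h1 h3]
    -- transfer from primed to unprimed sets
  have transfer : ∀ (aw uu : ℝ) (i : Fin n) (t : Fin d) (T : Finset (Fin k)),
      μ (⋂ j ∈ T, ((W' j t) ⁻¹' (Set.Icc aw (aw + g/2)) ∩
          (U' i j) ⁻¹' (Set.Icc uu (uu + g/2))))
        = μ (⋂ j ∈ T, ((fun ω => W j ω t) ⁻¹' (Set.Icc aw (aw + g/2)) ∩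
            (fun ω => U i ω j) ⁻¹' (Set.Icc uu (uu + g/2)))) := by
    intro aw uu i t T
    apply meqN
    intro ω hω
    simp only [Set.mem_iInter, Set.mem_inter_iff, Set.mem_preimage, hNW ω hω, hNU ω hω]
  have master : ∀ (aw uu : ℝ), -1 ≤ aw → aw + g/2 ≤ 1 → -1 ≤ uu → uu + g/2 ≤ 1 →
      ∀ (i : Fin n) (t : Fin d),
      (∀ j, μ ((W' j t) ⁻¹' (Set.Icc aw (aw + g/2)) ∩
          (U' i j) ⁻¹' (Set.Icc uu (uu + g/2))) = ENNReal.ofReal (g^2/16)) ∧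
      (∀ T : Finset (Fin k), μ (⋂ j ∈ T, ((W' j t) ⁻¹' (Set.Icc aw (aw + g/2)) ∩
          (U' i j) ⁻¹' (Set.Icc uu (uu + g/2))))
        = ∏ j ∈ T, μ ((W' j t) ⁻¹' (Set.Icc aw (aw + g/2)) ∩
            (U' i j) ⁻¹' (Set.Icc uu (uu + g/2)))) := by
    intro aw uu h1 h2 h3 h4 i t
    have key := key_prod μ W U hindep i t (Set.Icc aw (aw + g/2)) (Set.Icc uu (uu + g/2))
      measurableSet_Icc measurableSet_Icc
    have single : ∀ j, μ ((W' j t) ⁻¹' (Set.Icc aw (aw + g/2)) ∩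
        (U' i j) ⁻¹' (Set.Icc uu (uu + g/2)))
        = μ ((fun ω => W j ω t) ⁻¹' (Set.Icc aw (aw + g/2)))
          * μ ((fun ω => U i ω j) ⁻¹' (Set.Icc uu (uu + g/2))) := by
      intro j
      have e4 := transfer aw uu i t {j}
      have e5 := key {j}
      simp only [Finset.set_biInter_singleton, Finset.prod_singleton] at e4 e5
      rw [e4, e5]
    have value : ∀ j, μ ((W' j t) ⁻¹' (Set.Icc aw (aw + g/2)) ∩
        (U' i j) ⁻¹' (Set.Icc uu (uu + g/2))) = ENNReal.ofReal (g^2/16) := by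
      intro j
      rw [single j, hWIcc j t h1 (by linarith) h2, hUIcc i j h3 (by linarith) h4,
        show (aw + g/2 - aw)/2 = g/4 by ring, show (uu + g/2 - uu)/2 = g/4 by ring,
        ← ENNReal.ofReal_mul (by positivity)]
      congr 1; ring
    refine ⟨value, fun T => ?_⟩
    rw [transfer aw uu i t T, key T]
    exact (Finset.prod_congr rfl fun j _ => single j).symm
  have hq0 : 0 < g^2/16 := by positivity
  have hq1 : g^2/16 < 1 := by nlinarith
  -- failure probability for one block
  have hLm : Real.log (2 * (n:ℝ) * s / δ) ≤ g^2/16 * (m:ℝ) := by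
    refine hLm_aux hg0 ?_
    rw [hgdef, sixteen_aux hsr hnr hε]
    exact hm1
  have hbound : (1 - g^2/16)^m ≤ δ/(2*(n:ℝ)*s) := by
    refine (pow_bound_s5 m hq0 hq1 hLm).trans_eq ?_
    rw [Real.exp_neg, Real.exp_log (div_pos (by positivity) hδ), inv_div]
  have hfail : ∀ (C : Fin k → Set Ω), (∀ j, MeasurableSet (C j)) →
      (∀ T : Finset (Fin k), μ (⋂ j ∈ T, C j) = ∏ j ∈ T, μ (C j)) →
      (∀ j, μ (C j) = ENNReal.ofReal (g^2/16)) →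
      ∀ (T : Finset (Fin k)), T.card = m →
      μ ((⋃ j ∈ T, C j)ᶜ) ≤ ENNReal.ofReal (δ / (2 * (n:ℝ) * s)) :=
    fun C h1 h2 h3 T h4 => block_fail μ (g^2/16) (δ/(2*(n:ℝ)*s)) hq0 hq1 m hbound C h1 h2 h3 T h4
  have hfailp : ∀ i t, μ ((⋃ j ∈ J i t, Cp i t j)ᶜ) ≤ ENNReal.ofReal (δ / (2*n*s)) := by
    intro i t
    exact hfail (Cp i t) (hCpmeas i t)
      ((master (ap (i,t)) (up (i,t)) (hap1 _) (hap2 _) (hup1 _) (hup2 _) i t).2)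
      ((master (ap (i,t)) (up (i,t)) (hap1 _) (hap2 _) (hup1 _) (hup2 _) i t).1)
      (J i t) (hJcard i t)
  have hfailm : ∀ i t, μ ((⋃ j ∈ J i t, Cm i t j)ᶜ) ≤ ENNReal.ofReal (δ / (2*n*s)) := by
    intro i t
    exact hfail (Cm i t) (hCmmeas i t)
      ((master (am (i,t)) (um (i,t)) (ham1 _) (ham2 _) (hum1 _) (hum2 _) i t).2)
      ((master (am (i,t)) (um (i,t)) (ham1 _) (ham2 _) (hum1 _) (hum2 _) i t).1)
      (J i t) (hJcard i t)
  set G : Set Ω := ⋂ i, ⋂ t ∈ S i, ((⋃ j ∈ J i t, Cp i t j) ∩ (⋃ j ∈ J i t, Cm i t j))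
    with hGdef
  set β := ENNReal.ofReal (δ / (2*(n:ℝ)*s)) with hβdef
  have hGc : μ Gᶜ ≤ ENNReal.ofReal δ := by
    have h1 : Gᶜ ⊆ ⋃ i, ⋃ t, ⋃ (_ : t ∈ S i),
        ((⋃ j ∈ J i t, Cp i t j)ᶜ ∪ (⋃ j ∈ J i t, Cm i t j)ᶜ) := by
      rw [hGdef]
      intro ω hω
      simp only [Set.mem_compl_iff, Set.mem_iInter, not_forall] at hω
      obtain ⟨i, t, ht, hni⟩ := hω
      refine Set.mem_iUnion.2 ⟨i, Set.mem_iUnion.2 ⟨t, Set.mem_iUnion.2 ⟨ht, ?_⟩⟩⟩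
      rw [Set.mem_union, Set.mem_compl_iff, Set.mem_compl_iff]
      rw [Set.mem_inter_iff] at hni
      exact not_and_or.1 hni
    have h3 : ∀ (i : Fin n) (t : Fin d), μ (⋃ (_ : t ∈ S i),
        ((⋃ j ∈ J i t, Cp i t j)ᶜ ∪ (⋃ j ∈ J i t, Cm i t j)ᶜ))
        ≤ if t ∈ S i then 2*β else 0 := by
      intro i t
      by_cases ht : t ∈ S i
      · rw [if_pos ht, two_mul]
        refine (measure_mono (Set.iUnion_subset fun _ => subset_rfl)).trans ?_
        exact (measure_union_le _ _).trans (add_le_add (hfailp i t) (hfailm i t))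
      · rw [if_neg ht]
        have he : (⋃ (_ : t ∈ S i), ((⋃ j ∈ J i t, Cp i t j)ᶜ ∪ (⋃ j ∈ J i t, Cm i t j)ᶜ))
            = (∅ : Set Ω) := by simp [ht]
        rw [he, measure_empty]
    have h4 : ∀ i, μ (⋃ t, ⋃ (_ : t ∈ S i),
        ((⋃ j ∈ J i t, Cp i t j)ᶜ ∪ (⋃ j ∈ J i t, Cm i t j)ᶜ)) ≤ (s : ENNReal) * (2 * β) := by
      intro i
      refine (measure_iUnion_le _).trans ?_
      rw [tsum_fintype]
      refine (Finset.sum_le_sum fun t _ => h3 i t).trans ?_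
      rw [Finset.sum_ite_mem, Finset.univ_inter, Finset.sum_const, nsmul_eq_mul]
      exact mul_le_mul_left (by exact_mod_cast Nat.cast_le.2 (hScard i)) _
    refine le_trans (measure_mono h1) ((measure_iUnion_le _).trans ?_)
    rw [tsum_fintype]
    refine (Finset.sum_le_sum fun i _ => h4 i).trans ?_
    rw [Finset.sum_const, Finset.card_univ, Fintype.card_fin, nsmul_eq_mul]
    refine le_of_eq ?_
    rw [hβdef, show (2:ENNReal) = ENNReal.ofReal 2 from by norm_num,
      show ((s:ENNReal)) = ENNReal.ofReal (s:ℝ) from (ENNReal.ofReal_natCast s).symm,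
      show ((n:ENNReal)) = ENNReal.ofReal (n:ℝ) from (ENNReal.ofReal_natCast n).symm,
      ← ENNReal.ofReal_mul (by norm_num), ← ENNReal.ofReal_mul (by positivity),
      ← ENNReal.ofReal_mul (by positivity)]
    congr 1
    have h2ns : (2*(n:ℝ)*s) ≠ 0 := by positivity
    field_simp
  have hGge : ENNReal.ofReal (1 - δ) ≤ μ G := by
    have h1 : (1:ENNReal) ≤ μ G + μ Gᶜ := by
      have h0 := measure_union_le (μ := μ) G Gᶜ
      rw [Set.union_compl_self, measure_univ] at h0
      exact h0
    have h2 : ENNReal.ofReal (1 - δ) = 1 - ENNReal.ofReal δ := by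
      rw [ENNReal.ofReal_sub _ (le_of_lt hδ), ENNReal.ofReal_one]
    rw [h2]
    refine tsub_le_iff_right.2 (h1.trans ?_)
    exact add_le_add le_rfl hGc
  have hsub : G \ N ⊆ {ω : Ω | ∃ (b : Fin k → Fin d → ℝ)
        (btil : Fin n → Fin k → ℝ),
      (∀ j t, b j t = 0 ∨ b j t = 1) ∧ (∀ i j, btil i j = 0 ∨ btil i j = 1) ∧
      (∀ x : Fin d → ℝ, (∀ t, |x t| ≤ 1) →
        l2norm (fun i =>
          relu (∑ j, btil i j * U i ω j * relu (∑ t, W j ω t * b j t * x t)) -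
            relu (∑ t, wstar i t * x t)) ≤ ε) ∧
      (∑ j, l0 (b j)) ≤ 2 * s * n ∧ (∑ i, l0 (btil i)) ≤ 2 * s * n} := by
    rintro ω ⟨hωG, hωN⟩
    have hWev : ∀ j t, W j ω t = W' j t ω := hNW ω hωN
    have hUev : ∀ i j, U i ω j = U' i j ω := hNU ω hωN
    rw [hGdef] at hωG
    simp only [Set.mem_iInter] at hωG
    have hex1 : ∀ (i : Fin n) (t : Fin d), t ∈ S i → ∃ j, j ∈ J i t ∧ ω ∈ Cp i t j := by
      intro i t ht
      have h := (hωG i t ht).1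
      rw [Set.mem_iUnion₂] at h
      obtain ⟨j, hj1, hj2⟩ := h
      exact ⟨j, hj1, hj2⟩
    have hex2 : ∀ (i : Fin n) (t : Fin d), t ∈ S i → ∃ j, j ∈ J i t ∧ ω ∈ Cm i t j := by
      intro i t ht
      have h := (hωG i t ht).2
      rw [Set.mem_iUnion₂] at h
      obtain ⟨j, hj1, hj2⟩ := h
      exact ⟨j, hj1, hj2⟩
    choose jp hjpJ hjpC using hex1
    choose jm hjmJ hjmC using hex2
    have hWp : ∀ (i : Fin n) (t : Fin d) (ht : t ∈ S i),
        (ap (i,t) ≤ W (jp i t ht) ω t ∧ W (jp i t ht) ω t ≤ ap (i,t) + g/2) ∧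
        (up (i,t) ≤ U i ω (jp i t ht) ∧ U i ω (jp i t ht) ≤ up (i,t) + g/2) := by
      intro i t ht
      have h := hjpC i t ht
      rw [hCpdef, Set.mem_inter_iff, Set.mem_preimage, Set.mem_preimage, Set.mem_Icc,
        Set.mem_Icc, ← hWev, ← hUev] at h
      exact h
    have hWm : ∀ (i : Fin n) (t : Fin d) (ht : t ∈ S i),
        (am (i,t) ≤ W (jm i t ht) ω t ∧ W (jm i t ht) ω t ≤ am (i,t) + g/2) ∧
        (um (i,t) ≤ U i ω (jm i t ht) ∧ U i ω (jm i t ht) ≤ um (i,t) + g/2) := by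
      intro i t ht
      have h := hjmC i t ht
      rw [hCmdef, Set.mem_inter_iff, Set.mem_preimage, Set.mem_preimage, Set.mem_Icc,
        Set.mem_Icc, ← hWev, ← hUev] at h
      exact h
    have hWppos : ∀ i t ht, 0 < W (jp i t ht) ω t :=
      fun i t ht => hwp' (i,t) _ (hWp i t ht).1.1 (hWp i t ht).1.2
    have hWmneg : ∀ i t ht, W (jm i t ht) ω t < 0 :=
      fun i t ht => hwm' (i,t) _ (hWm i t ht).1.1 (hWm i t ht).1.2
    have happ : ∀ i t ht, |U i ω (jp i t ht) * W (jp i t ht) ω t - wstar i t| ≤ g :=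
      fun i t ht => hprodp (i,t) _ _ (hWp i t ht).1.1 (hWp i t ht).1.2
        (hWp i t ht).2.1 (hWp i t ht).2.2
    have happm : ∀ i t ht, |U i ω (jm i t ht) * W (jm i t ht) ω t - wstar i t| ≤ g :=
      fun i t ht => hprodm (i,t) _ _ (hWm i t ht).1.1 (hWm i t ht).1.2
        (hWm i t ht).2.1 (hWm i t ht).2.2
    have hblkp : ∀ i t ht, ∃ r, blk i (qof i t) r = jp i t ht := by
      intro i t ht
      have h := hjpJ i t ht
      rw [hJdef] at h
      simpa using h
    have hblkm : ∀ i t ht, ∃ r, blk i (qof i t) r = jm i t ht := by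
      intro i t ht
      have h := hjmJ i t ht
      rw [hJdef] at h
      simpa using h
    have huniq : ∀ (i i' : Fin n) (t t' : Fin d) (ht : t ∈ S i) (ht' : t' ∈ S i') (j : Fin k),
        (j = jp i t ht ∨ j = jm i t ht) → (j = jp i' t' ht' ∨ j = jm i' t' ht') →
        i = i' ∧ t = t' := by
      intro i i' t t' ht ht' j h1 h2
      obtain ⟨r1, hr1⟩ : ∃ r, blk i (qof i t) r = j := by
        rcases h1 with h | h
        · obtain ⟨r, hr⟩ := hblkp i t ht; exact ⟨r, hr.trans h.symm⟩
        · obtain ⟨r, hr⟩ := hblkm i t ht; exact ⟨r, hr.trans h.symm⟩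
      obtain ⟨r2, hr2⟩ : ∃ r, blk i' (qof i' t') r = j := by
        rcases h2 with h | h
        · obtain ⟨r, hr⟩ := hblkp i' t' ht'; exact ⟨r, hr.trans h.symm⟩
        · obtain ⟨r, hr⟩ := hblkm i' t' ht'; exact ⟨r, hr.trans h.symm⟩
      obtain ⟨hi, hq, -⟩ := blk_inj (hr1.trans hr2.symm)
      subst hi
      exact ⟨rfl, qof_inj i t t' ht ht' hq⟩
    have hpm_ne : ∀ i t ht, jp i t ht ≠ jm i t ht := by
      intro i t ht h
      have h1 := hWppos i t ht
      have h2 := hWmneg i t ht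
      rw [h] at h1
      linarith
    classical
    set b : Fin k → Fin d → ℝ := fun j t' =>
      if ∃ i, ∃ t, ∃ ht : t ∈ S i, t' = t ∧ (j = jp i t ht ∨ j = jm i t ht) then 1 else 0
      with hbdef
    set btil : Fin n → Fin k → ℝ := fun i j =>
      if ∃ t, ∃ ht : t ∈ S i, j = jp i t ht ∨ j = jm i t ht then 1 else 0 with hbtildef
    have hb_eval : ∀ (i : Fin n) (t : Fin d) (ht : t ∈ S i) (j : Fin k),
        (j = jp i t ht ∨ j = jm i t ht) →
        ∀ t', b j t' = if t' = t then 1 else 0 := by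
      intro i t ht j hj t'
      by_cases h : t' = t
      · rw [if_pos h, hbdef]
        exact if_pos ⟨i, t, ht, h, hj⟩
      · rw [if_neg h, hbdef]
        apply if_neg
        rintro ⟨i0, t0, ht0, htt, hj0⟩
        exact h (htt.trans (huniq i0 i t0 t ht0 ht j hj0 hj).2)
    have hbtil_one : ∀ (i : Fin n) (t : Fin d) (ht : t ∈ S i) (j : Fin k),
        (j = jp i t ht ∨ j = jm i t ht) → btil i j = 1 := by
      intro i t ht j hj
      rw [hbtildef]
      exact if_pos ⟨t, ht, hj⟩
    have hbtil_ex : ∀ (i : Fin n) (j : Fin k), btil i j ≠ 0 →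
        ∃ t, ∃ ht : t ∈ S i, j = jp i t ht ∨ j = jm i t ht := by
      intro i j h
      simp only [hbtildef] at h
      by_cases hc : ∃ t, ∃ ht : t ∈ S i, j = jp i t ht ∨ j = jm i t ht
      · exact hc
      · rw [if_neg hc] at h
        exact absurd rfl h
    set D : Fin n → Finset (Fin k) := fun i =>
      (S i).attach.biUnion (fun t => {jp i t.1 t.2, jm i t.1 t.2}) with hDdef
    have hDmem : ∀ (i : Fin n) (t : Fin d) (ht : t ∈ S i) (j : Fin k),
        (j = jp i t ht ∨ j = jm i t ht) → j ∈ D i := by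
      intro i t ht j hj
      rw [hDdef]
      refine Finset.mem_biUnion.2 ⟨⟨t, ht⟩, Finset.mem_attach _ _, ?_⟩
      rcases hj with h | h <;> simp [h]
    have hDcard : ∀ i, (D i).card ≤ 2 * s := by
      intro i
      rw [hDdef]
      refine (Finset.card_biUnion_le).trans ?_
      calc (∑ t ∈ (S i).attach, ({jp i t.1 t.2, jm i t.1 t.2} : Finset (Fin k)).card)
          ≤ ∑ _t ∈ (S i).attach, 2 := by
            refine Finset.sum_le_sum fun t _ => ?_
            exact Finset.card_insert_le _ _ |>.trans (by simp)
        _ = 2 * (S i).card := by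
            rw [Finset.sum_const, Finset.card_attach, smul_eq_mul, mul_comm]
        _ ≤ 2 * s := by have := hScard i; omega
    have hinner_eval : ∀ (x : Fin d → ℝ) (i : Fin n) (t : Fin d) (ht : t ∈ S i) (j : Fin k),
        (j = jp i t ht ∨ j = jm i t ht) →
        (∑ t', W j ω t' * b j t' * x t') = W j ω t * x t := by
      intro x i t ht j hor
      have h1 : ∀ t', W j ω t' * b j t' * x t' = if t' = t then W j ω t' * x t' else 0 := by
        intro t'
        rw [hb_eval i t ht j hor t']
        by_cases h : t' = t
        · rw [if_pos h, if_pos h]; ring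
        · rw [if_neg h, if_neg h]; ring
      rw [Finset.sum_congr rfl (fun t' _ => h1 t'), Finset.sum_ite_eq' Finset.univ t
        (fun t' => W j ω t' * x t'), if_pos (Finset.mem_univ t)]
    rw [Set.mem_setOf_eq]
    refine ⟨b, btil, ?_, ?_, ?_, ?_, ?_⟩
    · intro j t
      by_cases h : ∃ i, ∃ t0, ∃ ht : t0 ∈ S i, t = t0 ∧ (j = jp i t0 ht ∨ j = jm i t0 ht)
      · right; rw [hbdef]; exact if_pos h
      · left; rw [hbdef]; exact if_neg h
    · intro i j
      by_cases h : ∃ t, ∃ ht : t ∈ S i, j = jp i t ht ∨ j = jm i t ht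
      · right; rw [hbtildef]; exact if_pos h
      · left; rw [hbtildef]; exact if_neg h
    · -- approximation bound
      intro x hx
      have hterm : ∀ (i : Fin n) (t : Fin d) (ht : t ∈ S i),
          |U i ω (jp i t ht) * relu (W (jp i t ht) ω t * x t)
            + U i ω (jm i t ht) * relu (W (jm i t ht) ω t * x t) - wstar i t * x t| ≤ g := by
        intro i t ht
        have hP := happ i t ht
        have hM := happm i t ht
        rw [abs_le] at hP hM
        have e1 : relu (W (jp i t ht) ω t * x t) = W (jp i t ht) ω t * relu (x t) :=
          relu_mul (le_of_lt (hWppos i t ht))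
        have e2 : relu (W (jm i t ht) ω t * x t) = (-W (jm i t ht) ω t) * relu (-(x t)) := by
          rw [show W (jm i t ht) ω t * x t = (-W (jm i t ht) ω t) * (-(x t)) by ring]
          exact relu_mul (by linarith [hWmneg i t ht])
        rw [e1, e2]
        have ex : relu (x t) - relu (-(x t)) = x t := relu_sub (x t)
        have k5 : relu (x t) + relu (-(x t)) ≤ 1 := by
          rw [relu_addabs]; exact hx t
        have r1 := relu_nonneg (x t)
        have r2 := relu_nonneg (-(x t))
        set P := U i ω (jp i t ht) * W (jp i t ht) ω t with hPdef
        set M := U i ω (jm i t ht) * W (jm i t ht) ω t with hMdef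
        have e3 : U i ω (jp i t ht) * (W (jp i t ht) ω t * relu (x t))
            + U i ω (jm i t ht) * ((-W (jm i t ht) ω t) * relu (-(x t))) - wstar i t * x t
            = (P - wstar i t) * relu (x t) - (M - wstar i t) * relu (-(x t)) := by
          rw [hPdef, hMdef]
          linear_combination (wstar i t) * ex
        rw [e3, abs_le]
        constructor <;>
          nlinarith [mul_le_mul_of_nonneg_right hP.2 r1, mul_le_mul_of_nonneg_right hP.1 r1,
            mul_le_mul_of_nonneg_right hM.2 r2, mul_le_mul_of_nonneg_right hM.1 r2,
            hg0, k5]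
      have hi_bound : ∀ i : Fin n,
          |(∑ j, btil i j * U i ω j * relu (∑ t', W j ω t' * b j t' * x t'))
            - (∑ t, wstar i t * x t)| ≤ (s:ℝ) * g := by
        intro i
        have hstep1 : (∑ j, btil i j * U i ω j * relu (∑ t', W j ω t' * b j t' * x t'))
            = ∑ j ∈ D i, btil i j * U i ω j * relu (∑ t', W j ω t' * b j t' * x t') := by
          refine (Finset.sum_subset (Finset.subset_univ _) ?_).symm
          intro j _ hj
          have hb0 : btil i j = 0 := by
            by_contra h
            obtain ⟨t, ht, hor⟩ := hbtil_ex i j h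
            exact hj (hDmem i t ht j hor)
          rw [hb0]; ring
        have hdisj : Set.PairwiseDisjoint ((S i).attach : Set {x // x ∈ S i})
            (fun t => ({jp i t.1 t.2, jm i t.1 t.2} : Finset (Fin k))) := by
          intro t1 _ t2 _ hne
          refine Finset.disjoint_left.2 ?_
          intro j hj1 hj2
          simp only [Finset.mem_insert, Finset.mem_singleton] at hj1 hj2
          exact hne (Subtype.ext (huniq i i t1.1 t2.1 t1.2 t2.2 j hj1 hj2).2)
        have hstep2 : (∑ j ∈ D i, btil i j * U i ω j * relu (∑ t', W j ω t' * b j t' * x t'))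
            = ∑ t ∈ (S i).attach,
              (U i ω (jp i t.1 t.2) * relu (W (jp i t.1 t.2) ω t.1 * x t.1)
                + U i ω (jm i t.1 t.2) * relu (W (jm i t.1 t.2) ω t.1 * x t.1)) := by
          rw [hDdef, Finset.sum_biUnion hdisj]
          refine Finset.sum_congr rfl fun t _ => ?_
          rw [Finset.sum_pair (hpm_ne i t.1 t.2)]
          rw [hinner_eval x i t.1 t.2 _ (Or.inl rfl), hinner_eval x i t.1 t.2 _ (Or.inr rfl),
            hbtil_one i t.1 t.2 _ (Or.inl rfl), hbtil_one i t.1 t.2 _ (Or.inr rfl)]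
          ring
        have hstep3 : (∑ t, wstar i t * x t) = ∑ t ∈ (S i).attach, wstar i t.1 * x t.1 := by
          rw [Finset.sum_attach (S i) (fun t => wstar i t * x t)]
          exact (Finset.sum_subset (Finset.subset_univ _)
            (fun t _ ht => by rw [hzero i t ht, zero_mul])).symm
        rw [hstep1, hstep2, hstep3, ← Finset.sum_sub_distrib]
        calc |∑ t ∈ (S i).attach,
              ((U i ω (jp i t.1 t.2) * relu (W (jp i t.1 t.2) ω t.1 * x t.1)
                + U i ω (jm i t.1 t.2) * relu (W (jm i t.1 t.2) ω t.1 * x t.1))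
                - wstar i t.1 * x t.1)|
            ≤ ∑ t ∈ (S i).attach,
              |(U i ω (jp i t.1 t.2) * relu (W (jp i t.1 t.2) ω t.1 * x t.1)
                + U i ω (jm i t.1 t.2) * relu (W (jm i t.1 t.2) ω t.1 * x t.1))
                - wstar i t.1 * x t.1| := Finset.abs_sum_le_sum_abs _ _
          _ ≤ ∑ _t ∈ (S i).attach, g := Finset.sum_le_sum fun t _ => hterm i t.1 t.2
          _ = ((S i).card : ℝ) * g := by
              rw [Finset.sum_const, Finset.card_attach, nsmul_eq_mul]
          _ ≤ (s:ℝ) * g := by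
              refine mul_le_mul_of_nonneg_right ?_ (le_of_lt hg0)
              exact_mod_cast hScard i
      have hfin : ∀ i : Fin n,
          |relu (∑ j, btil i j * U i ω j * relu (∑ t', W j ω t' * b j t' * x t'))
            - relu (∑ t, wstar i t * x t)| ≤ (s:ℝ) * g :=
        fun i => (relu_lip _ _).trans (hi_bound i)
      refine (l2norm_le _ ((s:ℝ)*g) (by positivity) hfin).trans ?_
      rw [hgdef]
      have heq : Real.sqrt n * ((s:ℝ) * (ε / ((s:ℝ) * Real.sqrt n))) = ε := by
        field_simp
      exact le_of_eq heq
    · -- count of first-layer masks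
      have hl0b : ∀ j, l0 (b j) ≤ (if ∃ i, ∃ t, ∃ ht : t ∈ S i,
          j = jp i t ht ∨ j = jm i t ht then 1 else 0) := by
        intro j
        by_cases hj : ∃ i, ∃ t, ∃ ht : t ∈ S i, j = jp i t ht ∨ j = jm i t ht
        · rw [if_pos hj]
          obtain ⟨i, t, ht, hor⟩ := hj
          have hsub1 : Finset.univ.filter (fun t' => b j t' ≠ 0) ⊆ {t} := by
            intro t' h
            rw [Finset.mem_filter] at h
            rw [hb_eval i t ht j hor t'] at h
            rw [Finset.mem_singleton]
            by_contra hne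
            rw [if_neg hne] at h
            exact h.2 rfl
          have := Finset.card_le_card hsub1
          simpa [l0] using this
        · rw [if_neg hj]
          have hz : ∀ t', b j t' = 0 := by
            intro t'
            rw [hbdef]
            apply if_neg
            rintro ⟨i, t, ht, htt, hor⟩
            exact hj ⟨i, t, ht, hor⟩
          simp [l0, hz]
      calc (∑ j, l0 (b j)) ≤ ∑ j : Fin k, (if ∃ i, ∃ t, ∃ ht : t ∈ S i,
            j = jp i t ht ∨ j = jm i t ht then 1 else 0) :=
            Finset.sum_le_sum fun j _ => hl0b j
        _ = (Finset.univ.filter (fun j : Fin k => ∃ i, ∃ t, ∃ ht : t ∈ S i,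
            j = jp i t ht ∨ j = jm i t ht)).card := by
            rw [Finset.sum_boole]
            norm_num
        _ ≤ ∑ i : Fin n, (D i).card := by
            have hsub2 : Finset.univ.filter (fun j : Fin k => ∃ i, ∃ t, ∃ ht : t ∈ S i,
                j = jp i t ht ∨ j = jm i t ht) ⊆ Finset.univ.biUnion D := by
              intro j hj
              rw [Finset.mem_filter] at hj
              obtain ⟨-, i, t, ht, hor⟩ := hj
              exact Finset.mem_biUnion.2 ⟨i, Finset.mem_univ _, hDmem i t ht j hor⟩
            exact (Finset.card_le_card hsub2).trans Finset.card_biUnion_le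
        _ ≤ ∑ _i : Fin n, 2 * s := Finset.sum_le_sum fun i _ => hDcard i
        _ = n * (2 * s) := by
            rw [Finset.sum_const, Finset.card_univ, Fintype.card_fin, smul_eq_mul]
        _ = 2 * s * n := by ring
    · -- count of second-layer masks
      have hl0btil : ∀ i, l0 (btil i) ≤ (D i).card := by
        intro i
        have hsub1 : Finset.univ.filter (fun j => btil i j ≠ 0) ⊆ D i := by
          intro j hj
          rw [Finset.mem_filter] at hj
          obtain ⟨t, ht, hor⟩ := hbtil_ex i j hj.2
          exact hDmem i t ht j hor
        simpa [l0] using Finset.card_le_card hsub1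
      calc (∑ i, l0 (btil i)) ≤ ∑ i : Fin n, (D i).card :=
            Finset.sum_le_sum fun i _ => hl0btil i
        _ ≤ ∑ _i : Fin n, 2 * s := Finset.sum_le_sum fun i _ => hDcard i
        _ = n * (2 * s) := by
            rw [Finset.sum_const, Finset.card_univ, Fintype.card_fin, smul_eq_mul]
        _ = 2 * s * n := by ring


  calc ENNReal.ofReal (1 - δ) ≤ μ G := hGge
    _ = μ (G \ N) := (measure_diff_null hN0).symm
    _ ≤ _ := measure_mono hsub
end
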